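/- arXiv:2203.07758 — 2 statements merged into one kernel-verified Lean document; each statement's English description precedes it below -/
import Mathlib

section
/- Let α = Ω·α̃ be a multiple of Ω and β < Ω. Suppose α+β ∈ ε̂_{Ω+1}, α+β is a limit ordinal, and α+β ∉ FIX(X). If (β_n)_{n<ω} is a strictly increasing sequence with supremum β, then (Θ_X(α+β_n))_{n<ω} is strictly increasing with supremum Θ_X(α+β). -/
open Ordinal Set

noncomputable section
open scoped Classical

/-- `Ω`, the first uncountable ordinal. -/
def OmegaO : Ordinal := (Cardinal.aleph 1).ord

/-- `ε_{Ω+1}`, the least `ε > Ω` with `ω ^ ε = ε`. -/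
def epsOmega : Ordinal := nfp (fun a => Ordinal.omega0 ^ a) (OmegaO + 1)

lemma omega0_le_OmegaO : Ordinal.omega0 ≤ OmegaO := by
  rw [OmegaO, ← Cardinal.ord_aleph0]
  exact Cardinal.ord_le_ord.2 (Cardinal.aleph0_le_aleph 1)

lemma one_lt_OmegaO : 1 < OmegaO :=
  lt_of_lt_of_le Ordinal.one_lt_omega0 omega0_le_OmegaO

lemma OmegaO_pos : 0 < OmegaO := lt_trans zero_lt_one one_lt_OmegaO

/-- `ξ*`, the maximal coefficient in the `Ω`-normal form of `ξ`. -/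
def star (ξ : Ordinal) : Ordinal :=
  if h0 : ξ = 0 then 0
  else if hl : log OmegaO ξ < ξ then
    max (max (star (log OmegaO ξ)) (star (ξ % OmegaO ^ log OmegaO ξ)))
      (ξ / OmegaO ^ log OmegaO ξ)
  else 0
termination_by ξ
decreasing_by
  · exact hl
  · exact mod_opow_log_lt_self _ h0

/-- The generalized fundamental sequence `ξ[θ]`. -/
def fs (ξ θ : Ordinal) : Ordinal :=
  if h0 : ξ ≤ 1 then 0
  else if hmod : ξ % OmegaO ^ log OmegaO ξ ≠ 0 then
    OmegaO ^ log OmegaO ξ * (ξ / OmegaO ^ log OmegaO ξ) + fs (ξ % OmegaO ^ log OmegaO ξ) θ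
  else if Order.IsSuccLimit (ξ / OmegaO ^ log OmegaO ξ) then OmegaO ^ log OmegaO ξ * θ
  else if hβ : ξ / OmegaO ^ log OmegaO ξ = 1 then
    (if hlog : Order.IsSuccLimit (log OmegaO ξ) then
       (if hll : log OmegaO ξ < ξ then OmegaO ^ fs (log OmegaO ξ) θ else 0)
     else OmegaO ^ Ordinal.pred (log OmegaO ξ) * θ)
  else
    OmegaO ^ log OmegaO ξ * Ordinal.pred (ξ / OmegaO ^ log OmegaO ξ) + fs (OmegaO ^ log OmegaO ξ) θ
termination_by ξ
decreasing_by
  · exact mod_opow_log_lt_self _ (by intro h; exact h0 (by simp [h]))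
  · exact hll
  · -- `Ω ^ log Ω ξ < ξ`
    have hξ0 : ξ ≠ 0 := by intro h; exact h0 (by simp [h])
    have hle : OmegaO ^ log OmegaO ξ ≤ ξ := opow_log_le_self _ hξ0
    have hpos : 0 < OmegaO ^ log OmegaO ξ :=
      opow_pos _ OmegaO_pos
    have hβ0 : 0 < ξ / OmegaO ^ log OmegaO ξ :=
      Ordinal.div_pos (by positivity) |>.2 hle
    have hβ1 : 1 < ξ / OmegaO ^ log OmegaO ξ :=
      lt_of_le_of_ne (Ordinal.one_le_iff_ne_zero.2 hβ0.ne') (Ne.symm hβ)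
    calc OmegaO ^ log OmegaO ξ = OmegaO ^ log OmegaO ξ * 1 := (mul_one _).symm
      _ < OmegaO ^ log OmegaO ξ * (ξ / OmegaO ^ log OmegaO ξ) := by
          exact mul_lt_mul_of_pos_left hβ1 hpos
      _ ≤ ξ := Ordinal.mul_div_le _ _

/-- The terminal part `τ(ξ)`. -/
def tau (ξ : Ordinal) : Ordinal :=
  if h0 : ξ = 0 then 0
  else if hmod : ξ % OmegaO ^ log OmegaO ξ ≠ 0 then tau (ξ % OmegaO ^ log OmegaO ξ)
  else if Order.IsSuccLimit (ξ / OmegaO ^ log OmegaO ξ) then ξ / OmegaO ^ log OmegaO ξ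
  else if log OmegaO ξ = 0 then 1
  else if hlog : Order.IsSuccLimit (log OmegaO ξ) then
    (if hll : log OmegaO ξ < ξ then tau (log OmegaO ξ) else 0)
  else OmegaO
termination_by ξ
decreasing_by
  · exact mod_opow_log_lt_self _ h0
  · exact hll

/-- The collapsing function `Θ_X`. -/
def ThetaF (X : Set Ordinal) (ξ : Ordinal) : Ordinal :=
  sInf {θ | θ ∈ X ∧ star ξ < θ ∧ ∀ ζ, ζ < ξ → star ζ < θ → ThetaF X ζ < θ}
termination_by ξ
decreasing_by exact by assumption

/-- `Ω_n`: the tower `Ω_0 = 1`, `Ω_{n+1} = Ω ^ Ω_n`. -/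
def OmegaTow : ℕ → Ordinal
  | 0 => 1
  | n + 1 => OmegaO ^ OmegaTow n

/-- `Θ_X(ε_{Ω+1}) = sup_n Θ_X(Ω_n)`. -/
def ThetaEps (X : Set Ordinal) : Ordinal := ⨆ n : ℕ, ThetaF X (OmegaTow n)

/-- `ε̂_{Ω+1}`. -/
def hatEps (X : Set Ordinal) : Set Ordinal :=
  {ξ | ξ < epsOmega ∧ star ξ < ThetaEps X}

/-- `X` is a club in `Ω`. -/
def IsClubBelowOmega (X : Set Ordinal) : Prop :=
  (∀ x ∈ X, x < OmegaO) ∧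
  (∀ a, a < OmegaO → ∃ x ∈ X, a < x) ∧
  (∀ S : Set Ordinal, S ⊆ X → S.Nonempty → sSup S < OmegaO → sSup S ∈ X)

/-- The set of limit points of `X` (below `Ω`). -/
def limitPtsOf (X : Set Ordinal) : Set Ordinal :=
  {x | 0 < x ∧ ∀ y, y < x → ∃ z ∈ X, y < z ∧ z < x}

/-- `FIX(X)`. -/
def FIXs (X : Set Ordinal) : Set Ordinal :=
  {ξ | ξ < epsOmega ∧ star (fs ξ 1) < star ξ ∧ star ξ = tau ξ ∧
    ∃ γ, ξ < γ ∧ γ < epsOmega ∧ star ξ = ThetaF X γ}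

/-- `JUMP(X)`. -/
def JUMPs (X : Set Ordinal) : Set Ordinal :=
  {0} ∪ {ξ | ∃ ζ, ξ = ζ + 1} ∪ FIXs X

/-- `Θ*`. -/
def ThetaStarF (X : Set Ordinal) (ξ : Ordinal) : Ordinal :=
  if ∃ ζ, ξ = ζ + 1 then ThetaF X (Ordinal.pred ξ)
  else if ξ ∈ FIXs X then tau ξ
  else 0

/-- `ξ̌`. -/
def checkF (X : Set Ordinal) (ξ : Ordinal) : Ordinal :=
  if 0 < ThetaStarF X ξ then OmegaO * (ξ / OmegaO) else ξ

/-- `ℙ`, the club of countable additively indecomposable ordinals. -/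
def PP : Set Ordinal := {x | x < OmegaO ∧ ∃ a, x = Ordinal.omega0 ^ a}

/-- `1 + Ord`, the club of nonzero countable ordinals. -/
def oneOrdS : Set Ordinal := {x | 0 < x ∧ x < OmegaO}

/-- `Θ^{(i)}(ξ)`. -/
def ThetaIter (X : Set Ordinal) (ξ : Ordinal) : ℕ → Ordinal
  | 0 => ThetaStarF X ξ
  | n + 1 => ThetaF X (fs (checkF X ξ) (ThetaIter X ξ n))

/-- A Buchholz system of fundamental sequences for `Θ_X`. -/
def IsBuchholz (X : Set Ordinal) (B : Ordinal → ℕ → Ordinal) : Prop :=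
  (∀ n, B 0 n = 0) ∧
  (∀ α ξ n, ξ ∈ hatEps X → OmegaO ≤ ξ → tau ξ < OmegaO → ξ = fs α (tau ξ) →
    B ξ n = fs α (B (tau ξ) n)) ∧
  (∀ ξ n, ξ ∈ hatEps X → 0 < tau (checkF X ξ) → tau (checkF X ξ) < OmegaO →
    B (ThetaF X ξ) n = ThetaF X (B (checkF X ξ) n + ThetaStarF X ξ)) ∧
  (∀ ξ n, ξ ∈ hatEps X → tau (checkF X ξ) = OmegaO →
    B (ThetaF X ξ) n = ThetaIter X ξ n)

/-- The additional clause for the `σ = Θ_{1+Ord}` Buchholz system. -/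
def SigmaExtra (B : Ordinal → ℕ → Ordinal) : Prop :=
  ∀ β n, β < OmegaO → B (ThetaF oneOrdS β) n = β

/-- The additional clauses for the `ϑ = Θ_ℙ` Buchholz system. -/
def VarthetaExtra (B : Ordinal → ℕ → Ordinal) : Prop :=
  (∀ α β n, 0 < β → (∀ α' < α, α' + β < α + β) → B (α + β) n = α + B β n) ∧
  (∀ β n, β < OmegaO → β ∈ JUMPs PP → B (ThetaF PP β) n = ThetaStarF PP β * n)


-- ===================== auxiliary lemmas =====================

lemma OmegaO_ne_zero : OmegaO ≠ 0 := OmegaO_pos.ne'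

lemma principal_add_OmegaO : Principal (· + ·) OmegaO :=
  Ordinal.principal_add_ord (Cardinal.aleph0_le_aleph 1)

lemma principal_add_opow_OmegaO (a : Ordinal) : Principal (· + ·) (OmegaO ^ a) := by
  rcases Ordinal.principal_add_iff_zero_or_omega0_opow.1 principal_add_OmegaO with h | ⟨e, he⟩
  · exact absurd h OmegaO_ne_zero
  · have he' : OmegaO = Ordinal.omega0 ^ e := he.symm
    rw [he', ← Ordinal.opow_mul]
    exact Ordinal.principal_add_omega0_opow _

lemma iSup_lt_OmegaO {f : ℕ → Ordinal} (hf : ∀ n, f n < OmegaO) : (⨆ n, f n) < OmegaO := by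
  rw [OmegaO] at *
  rw [Cardinal.ord_aleph] at *
  exact Ordinal.iSup_lt_omega_one hf

/-! ### epsOmega -/

lemma omega0_opow_epsOmega : Ordinal.omega0 ^ epsOmega = epsOmega :=
  Ordinal.nfp_fp (Ordinal.isNormal_opow Ordinal.one_lt_omega0) _

lemma OmegaO_lt_epsOmega : OmegaO < epsOmega :=
  lt_of_lt_of_le (lt_add_of_pos_right OmegaO zero_lt_one) (Ordinal.le_nfp _ _)

lemma epsOmega_pos : 0 < epsOmega := OmegaO_pos.trans OmegaO_lt_epsOmega

lemma lt_opow_self_of_lt_epsOmega {ζ : Ordinal} (h0 : ζ ≠ 0) (h : ζ < epsOmega) :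
    ζ < OmegaO ^ ζ := by
  rcases lt_or_eq_of_le (Ordinal.right_le_opow ζ one_lt_OmegaO) with hlt | heq
  · exact hlt
  exfalso
  have hω : Ordinal.omega0 ^ ζ = ζ :=
    le_antisymm ((Ordinal.opow_le_opow_left ζ omega0_le_OmegaO).trans heq.symm.le)
      (Ordinal.right_le_opow ζ Ordinal.one_lt_omega0)
  have hΩle : OmegaO ≤ ζ := by
    calc OmegaO = OmegaO ^ (1 : Ordinal) := (Ordinal.opow_one _).symm
      _ ≤ OmegaO ^ ζ := Ordinal.opow_le_opow_right OmegaO_pos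
            (Ordinal.one_le_iff_ne_zero.2 h0)
      _ = ζ := heq.symm
  have hself : OmegaO < OmegaO ^ OmegaO := by
    conv_lhs => rw [← Ordinal.opow_one OmegaO]
    rw [Ordinal.opow_lt_opow_iff_right one_lt_OmegaO]
    exact one_lt_OmegaO
  have hΩlt : OmegaO < ζ := by
    rcases hΩle.lt_or_eq with h' | h'
    · exact h'
    · exfalso
      rw [← h'] at heq
      exact absurd heq (ne_of_lt hself)
  have heps : epsOmega ≤ ζ := by
    apply Ordinal.nfp_le_fp (Ordinal.isNormal_opow Ordinal.one_lt_omega0).monotone _ hω.le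
    rw [Ordinal.add_one_eq_succ]
    exact Order.succ_le_of_lt hΩlt
  exact absurd h (not_lt.2 heps)

lemma log_OmegaO_lt {ζ : Ordinal} (h0 : ζ ≠ 0) (h : ζ < epsOmega) : log OmegaO ζ < ζ := by
  rcases lt_or_eq_of_le (Ordinal.log_le_self OmegaO ζ) with hlt | heq
  · exact hlt
  · exfalso
    have := Ordinal.opow_log_le_self OmegaO h0
    rw [heq] at this
    exact absurd (lt_opow_self_of_lt_epsOmega h0 h) (not_lt.2 this)

lemma OmegaO_opow_lt_epsOmega {b : Ordinal} (hb : b < epsOmega) : OmegaO ^ b < epsOmega := by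
  have h1 : OmegaO ^ b ≤ Ordinal.omega0 ^ (OmegaO * b) := by
    calc OmegaO ^ b ≤ (Ordinal.omega0 ^ OmegaO) ^ b :=
          Ordinal.opow_le_opow_left b (Ordinal.right_le_opow _ Ordinal.one_lt_omega0)
      _ = Ordinal.omega0 ^ (OmegaO * b) := (Ordinal.opow_mul _ _ _).symm
  have hmul : OmegaO * b < epsOmega := by
    have hP : Principal (· * ·) epsOmega := by
      have : epsOmega = Ordinal.omega0 ^ Ordinal.omega0 ^ epsOmega := by
        rw [omega0_opow_epsOmega, omega0_opow_epsOmega]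
      rw [this]
      exact Ordinal.principal_mul_omega0_opow_opow _
    exact hP OmegaO_lt_epsOmega hb
  calc OmegaO ^ b ≤ Ordinal.omega0 ^ (OmegaO * b) := h1
    _ < Ordinal.omega0 ^ epsOmega := by
        rw [Ordinal.opow_lt_opow_iff_right Ordinal.one_lt_omega0]; exact hmul
    _ = epsOmega := omega0_opow_epsOmega
/-! ### star computations -/

lemma star0 : _root_.star 0 = 0 := by rw [star.eq_def]; simp

lemma star_eq {ζ : Ordinal} (h0 : ζ ≠ 0) (hl : log OmegaO ζ < ζ) :
    star ζ = max (max (star (log OmegaO ζ)) (star (ζ % OmegaO ^ log OmegaO ζ)))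
      (ζ / OmegaO ^ log OmegaO ζ) := by
  rw [star.eq_def, dif_neg h0, dif_pos hl]

lemma star_of_lt_OmegaO {x : Ordinal} (hx : x < OmegaO) : star x = x := by
  rcases eq_or_ne x 0 with rfl | h0
  · exact star0
  · have hlog : log OmegaO x = 0 := Ordinal.log_eq_zero hx
    rw [star_eq h0 (by rw [hlog]; exact pos_iff_ne_zero.2 h0), hlog]
    simp only [Ordinal.opow_zero, Ordinal.mod_one, Ordinal.div_one, star0, max_self]
    exact max_eq_right (zero_le (a := x))

lemma starOne : _root_.star 1 = 1 := star_of_lt_OmegaO one_lt_OmegaO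

/-- Decomposition of `Ω·t + x` in `Ω`-normal form data. -/
lemma NF_decomp {t x : Ordinal} (ht : t ≠ 0) (hx : x < OmegaO) :
    ∃ t', t' < t ∧
      1 ≤ log OmegaO (OmegaO * t) ∧
      log OmegaO (OmegaO * t + x) = log OmegaO (OmegaO * t) ∧
      (OmegaO * t + x) / OmegaO ^ log OmegaO (OmegaO * t)
        = OmegaO * t / OmegaO ^ log OmegaO (OmegaO * t) ∧
      (OmegaO * t + x) % OmegaO ^ log OmegaO (OmegaO * t) = OmegaO * t' + x ∧
      OmegaO * t % OmegaO ^ log OmegaO (OmegaO * t) = OmegaO * t' := by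
  set a := log OmegaO (OmegaO * t) with ha
  have htne : OmegaO * t ≠ 0 := mul_ne_zero OmegaO_ne_zero ht
  have ha1 : 1 ≤ a := by
    rw [ha, ← Ordinal.opow_le_iff_le_log one_lt_OmegaO htne, Ordinal.opow_one]
    calc OmegaO = OmegaO * 1 := (mul_one _).symm
      _ ≤ OmegaO * t := mul_le_mul_right (Ordinal.one_le_iff_ne_zero.2 ht) _
  have hopne : (OmegaO ^ a) ≠ 0 := Ordinal.opow_ne_zero a OmegaO_ne_zero
  have hP : Principal (· + ·) (OmegaO ^ a) := principal_add_opow_OmegaO a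
  set q := OmegaO * t / OmegaO ^ a with hq
  set r := OmegaO * t % OmegaO ^ a with hr
  have hrlt : r < OmegaO ^ a := Ordinal.mod_lt _ hopne
  have hxlt : x < OmegaO ^ a :=
    hx.trans_le (by calc OmegaO = OmegaO ^ (1:Ordinal) := (Ordinal.opow_one _).symm
      _ ≤ OmegaO ^ a := Ordinal.opow_le_opow_right OmegaO_pos ha1)
  have hrx : r + x < OmegaO ^ a := hP hrlt hxlt
  have hdm : OmegaO ^ a * q + r = OmegaO * t := Ordinal.div_add_mod _ _
  have hξ : OmegaO * t + x = OmegaO ^ a * q + (r + x) := by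
    rw [← add_assoc, hdm]
  have hqne : q ≠ 0 := by
    rw [hq, ← pos_iff_ne_zero]
    exact (Ordinal.div_pos hopne).2 (Ordinal.opow_log_le_self OmegaO htne)
  have hqlt : q < OmegaO := by
    rw [hq, Ordinal.div_lt hopne, ← Ordinal.opow_succ]
    exact Ordinal.lt_opow_succ_log_self one_lt_OmegaO _
  -- the log of the sum
  have hlog : log OmegaO (OmegaO * t + x) = a := by
    rw [hξ, Ordinal.log_opow_mul_add one_lt_OmegaO hqne hrx,
      Ordinal.log_eq_zero hqlt, add_zero]
  -- div and mod of the sum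
  have hdiv : (OmegaO * t + x) / OmegaO ^ a = q := by
    rw [hξ, Ordinal.mul_add_div _ hopne, Ordinal.div_eq_zero_of_lt hrx, add_zero]
  have hmod : (OmegaO * t + x) % OmegaO ^ a = r + x := by
    rw [hξ, Ordinal.mul_add_mod_self, Ordinal.mod_eq_of_lt hrx]
  -- r is a multiple of Ω
  have hopowsplit : OmegaO ^ a = OmegaO * OmegaO ^ (a - 1) := by
    conv_lhs => rw [← Ordinal.add_sub_cancel_of_le ha1]
    rw [Ordinal.opow_add, Ordinal.opow_one]
  have h1 : OmegaO * (t - OmegaO ^ (a - 1) * q) = r := by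
    rw [Ordinal.mul_sub, ← mul_assoc, ← hopowsplit, ← hdm, Ordinal.add_sub_cancel]
  refine ⟨t - OmegaO ^ (a - 1) * q, ?_, ha1, hlog, by rw [hdiv], ?_, ?_⟩
  · have h2 : OmegaO * (t - OmegaO ^ (a - 1) * q) < OmegaO * t := by
      rw [h1]
      exact hrlt.trans_le (Ordinal.opow_log_le_self OmegaO htne)
    exact (mul_lt_mul_iff_right₀ OmegaO_pos).1 h2
  · rw [hmod, h1]
  · exact h1.symm
lemma max_shuffle (A B C D : Ordinal) :
    max (max A (max B C)) D = max (max (max A B) D) C := by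
  simp [max_assoc, max_comm, max_left_comm]

lemma star_add : ∀ t : Ordinal, ∀ {x : Ordinal}, x < OmegaO →
    OmegaO * t + x < epsOmega →
    _root_.star (OmegaO * t + x) = max (_root_.star (OmegaO * t)) (_root_.star x) := by
  intro t
  induction t using Ordinal.induction with
  | h t IH =>
    intro x hx heps
    rcases eq_or_ne t 0 with rfl | ht
    · simp only [mul_zero, zero_add, star0]
      exact (max_eq_right (zero_le)).symm
    rcases eq_or_ne x 0 with rfl | hx0
    · rw [add_zero, star0]
      exact (max_eq_left (zero_le)).symm
    obtain ⟨t', ht', ha1, hlog, hdiv, hmodx, hmodt⟩ := NF_decomp ht hx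
    have htne : OmegaO * t ≠ 0 := mul_ne_zero OmegaO_ne_zero ht
    have hxpos : (0:Ordinal) < x := pos_iff_ne_zero.2 hx0
    have hξne : OmegaO * t + x ≠ 0 := by
      intro h
      exact hx0 (by simpa using le_antisymm (h ▸ le_add_self) (zero_le (a := x)))
    have htlt : OmegaO * t < epsOmega := lt_of_le_of_lt le_self_add heps
    have ht'x : OmegaO * t' + x < epsOmega := by
      refine lt_of_le_of_lt ?_ heps
      exact add_le_add_left ((mul_le_mul_iff_right₀ OmegaO_pos).2 ht'.le) x
    -- unfold star on both sides
    rw [star_eq hξne (log_OmegaO_lt hξne heps), hlog, hdiv, hmodx]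
    rw [star_eq htne (log_OmegaO_lt htne htlt), hmodt]
    rw [IH t' ht' hx ht'x]
    exact max_shuffle _ _ _ _

lemma tau_add : ∀ t : Ordinal, ∀ {x : Ordinal}, 0 < x → x < OmegaO →
    OmegaO * t + x < epsOmega → tau (OmegaO * t + x) = tau x := by
  intro t
  induction t using Ordinal.induction with
  | h t IH =>
    intro x hx0 hx heps
    rcases eq_or_ne t 0 with rfl | ht
    · rw [mul_zero, zero_add]
    obtain ⟨t', ht', ha1, hlog, hdiv, hmodx, hmodt⟩ := NF_decomp ht hx
    have hξne : OmegaO * t + x ≠ 0 := by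
      intro h
      exact hx0.ne' (le_antisymm (h ▸ le_add_self) (zero_le (a := x)))
    have ht'x : OmegaO * t' + x < epsOmega :=
      lt_of_le_of_lt (add_le_add_left ((mul_le_mul_iff_right₀ OmegaO_pos).2 ht'.le) x) heps
    have hmodne : OmegaO * t' + x ≠ 0 := by
      intro h
      exact hx0.ne' (le_antisymm (h ▸ le_add_self) (zero_le (a := x)))
    rw [tau.eq_def, dif_neg hξne, hlog, hmodx, dif_pos hmodne]
    exact IH t' ht' hx0 hx ht'x

lemma fs_add : ∀ t : Ordinal, ∀ {x : Ordinal} (θ : Ordinal), 0 < x → x < OmegaO →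
    OmegaO * t + x < epsOmega → fs (OmegaO * t + x) θ = OmegaO * t + fs x θ := by
  intro t
  induction t using Ordinal.induction with
  | h t IH =>
    intro x θ hx0 hx heps
    rcases eq_or_ne t 0 with rfl | ht
    · rw [mul_zero, zero_add, zero_add]
    obtain ⟨t', ht', ha1, hlog, hdiv, hmodx, hmodt⟩ := NF_decomp ht hx
    have htne : OmegaO * t ≠ 0 := mul_ne_zero OmegaO_ne_zero ht
    have hξgt1 : ¬ (OmegaO * t + x ≤ 1) := by
      push_neg
      calc (1:Ordinal) < OmegaO := one_lt_OmegaO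
        _ = OmegaO * 1 := (mul_one _).symm
        _ ≤ OmegaO * t := mul_le_mul_right (Ordinal.one_le_iff_ne_zero.2 ht) _
        _ ≤ OmegaO * t + x := le_self_add
    have hmodne : OmegaO * t' + x ≠ 0 := by
      intro h
      exact hx0.ne' (le_antisymm (h ▸ le_add_self) (zero_le (a := x)))
    have ht'x : OmegaO * t' + x < epsOmega :=
      lt_of_le_of_lt (add_le_add_left ((mul_le_mul_iff_right₀ OmegaO_pos).2 ht'.le) x) heps
    rw [fs.eq_def, dif_neg hξgt1, hlog, hdiv, hmodx, dif_pos hmodne]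
    rw [IH t' ht' θ hx0 hx ht'x, ← add_assoc]
    congr 1
    have : OmegaO ^ log OmegaO (OmegaO * t) * (OmegaO * t / OmegaO ^ log OmegaO (OmegaO * t))
        + OmegaO * t' = OmegaO * t := by
      rw [← hmodt]
      exact Ordinal.div_add_mod _ _
    exact this

lemma tau_of_limit {β : Ordinal} (hβ : Order.IsSuccLimit β) (hb : β < OmegaO) : tau β = β := by
  have hlog : log OmegaO β = 0 := Ordinal.log_eq_zero hb
  rw [tau.eq_def, dif_neg hβ.pos.ne', hlog]
  simp only [Ordinal.opow_zero, Ordinal.mod_one, Ordinal.div_one, ne_eq,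
    not_true_eq_false, dif_neg, not_not]
  simp [hβ]

lemma fs_one_of_limit {β : Ordinal} (hβ : Order.IsSuccLimit β) (hb : β < OmegaO) :
    fs β 1 = 1 := by
  have hlog : log OmegaO β = 0 := Ordinal.log_eq_zero hb
  have h1 : ¬ (β ≤ 1) := not_le.2 (Ordinal.one_lt_of_isSuccLimit hβ)
  rw [fs.eq_def, dif_neg h1, hlog]
  simp only [Ordinal.opow_zero, Ordinal.mod_one, Ordinal.div_one, ne_eq,
    not_true_eq_false, dif_neg, not_not]
  simp [hβ]

lemma OmegaTow_pos : ∀ n, 0 < OmegaTow n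
  | 0 => zero_lt_one
  | n + 1 => Ordinal.opow_pos _ OmegaO_pos

lemma OmegaTow_lt_epsOmega : ∀ n, OmegaTow n < epsOmega
  | 0 => one_lt_OmegaO.trans OmegaO_lt_epsOmega
  | n + 1 => OmegaO_opow_lt_epsOmega (OmegaTow_lt_epsOmega n)

lemma star_OmegaTow : ∀ n, _root_.star (OmegaTow n) = 1
  | 0 => starOne
  | n + 1 => by
    have hT := OmegaTow_pos n
    have hTeps := OmegaTow_lt_epsOmega n
    have hlog : log OmegaO (OmegaO ^ OmegaTow n) = OmegaTow n :=
      Ordinal.log_opow one_lt_OmegaO _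
    have hne : OmegaO ^ OmegaTow n ≠ 0 := Ordinal.opow_ne_zero _ OmegaO_ne_zero
    show _root_.star (OmegaO ^ OmegaTow n) = 1
    rw [star_eq hne (by rw [hlog]; exact lt_opow_self_of_lt_epsOmega hT.ne' hTeps), hlog,
      Ordinal.mod_self, Ordinal.div_self hne, star0, star_OmegaTow n]
    simp
/-! ### countability of coefficient-bounded sets -/

/-- Closure sets approximating `{ζ < ε_{Ω+1} : ζ* < θ}`. -/
def Dset (θ : Ordinal) : ℕ → Set Ordinal
  | 0 => Iio θ ∪ {0}
  | n + 1 => Dset θ n ∪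
      (fun p : Ordinal × Ordinal × Ordinal => OmegaO ^ p.1 * p.2.1 + p.2.2) ''
        (Dset θ n ×ˢ Iio θ ×ˢ Dset θ n)

lemma Dset_subset_succ (θ : Ordinal) (n : ℕ) : Dset θ n ⊆ Dset θ (n + 1) :=
  subset_union_left

lemma Dset_mono (θ : Ordinal) {m n : ℕ} (h : m ≤ n) : Dset θ m ⊆ Dset θ n := by
  induction n with
  | zero => rw [Nat.le_zero.1 h]
  | succ n IH =>
    rcases Nat.le_succ_iff.1 h with h' | h'
    · exact (IH h').trans (Dset_subset_succ θ n)
    · rw [h']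

lemma card_lt_OmegaO_countable {θ : Ordinal} (hθ : θ < OmegaO) : (Iio θ).Countable := by
  rw [Cardinal.countable_iff_lt_aleph_one, Cardinal.mk_Iio_ordinal]
  have h1 : θ.card < Cardinal.aleph 1 := Cardinal.lt_ord.1 hθ
  have h2 : θ.card ≤ Cardinal.aleph0 := by
    rwa [← Cardinal.succ_aleph0, Order.lt_succ_iff] at h1
  calc Cardinal.lift θ.card ≤ Cardinal.aleph0 := Cardinal.lift_le_aleph0.2 h2
    _ < Cardinal.aleph 1 := Cardinal.aleph0_lt_aleph_one

lemma Dset_countable {θ : Ordinal} (hθ : θ < OmegaO) : ∀ n, (Dset θ n).Countable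
  | 0 => (card_lt_OmegaO_countable hθ).union (countable_singleton 0)
  | n + 1 => ((Dset_countable hθ n).union
      (((Dset_countable hθ n).prod ((card_lt_OmegaO_countable hθ).prod
        (Dset_countable hθ n))).image _))

lemma mem_iUnion_Dset {θ : Ordinal} (hθ0 : 0 < θ) :
    ∀ ζ, ζ < epsOmega → _root_.star ζ < θ → ζ ∈ ⋃ n, Dset θ n := by
  intro ζ
  induction ζ using Ordinal.induction with
  | h ζ IH =>
    intro hζeps hζstar
    rcases eq_or_ne ζ 0 with rfl | h0
    · exact mem_iUnion.2 ⟨0, Or.inr rfl⟩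
    rcases lt_or_ge ζ OmegaO with hζΩ | hΩζ
    · refine mem_iUnion.2 ⟨0, Or.inl ?_⟩
      rwa [star_of_lt_OmegaO hζΩ] at hζstar
    · -- ζ ≥ Ω
      have hguard : log OmegaO ζ < ζ := log_OmegaO_lt h0 hζeps
      have hste := star_eq h0 hguard
      have hstara : _root_.star (log OmegaO ζ) < θ :=
        lt_of_le_of_lt (le_max_of_le_left (le_max_left _ _)) (hste ▸ hζstar)
      have hstarm : _root_.star (ζ % OmegaO ^ log OmegaO ζ) < θ :=
        lt_of_le_of_lt (le_max_of_le_left (le_max_right _ _)) (hste ▸ hζstar)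
      have hdivθ : ζ / OmegaO ^ log OmegaO ζ < θ :=
        lt_of_le_of_lt (le_max_right _ _) (hste ▸ hζstar)
      have hmodlt : ζ % OmegaO ^ log OmegaO ζ < ζ :=
        lt_of_lt_of_le (Ordinal.mod_lt ζ (Ordinal.opow_ne_zero _ OmegaO_ne_zero))
          (Ordinal.opow_log_le_self OmegaO h0)
      obtain ⟨n1, hn1⟩ := mem_iUnion.1
        (IH _ hguard (hguard.trans hζeps) hstara)
      obtain ⟨n2, hn2⟩ := mem_iUnion.1
        (IH _ hmodlt (hmodlt.trans hζeps) hstarm)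
      refine mem_iUnion.2 ⟨max n1 n2 + 1, Or.inr ?_⟩
      refine ⟨⟨log OmegaO ζ, ζ / OmegaO ^ log OmegaO ζ, ζ % OmegaO ^ log OmegaO ζ⟩,
        ⟨Dset_mono θ (le_max_left n1 n2) hn1, hdivθ,
          Dset_mono θ (le_max_right n1 n2) hn2⟩, ?_⟩
      exact Ordinal.div_add_mod ζ _
/-! ### the collapsing function -/

/-- The defining set for `Θ_X(ξ)`. -/
def SS (X : Set Ordinal) (ξ : Ordinal) : Set Ordinal :=
  {θ | θ ∈ X ∧ _root_.star ξ < θ ∧ ∀ ζ, ζ < ξ → _root_.star ζ < θ → ThetaF X ζ < θ}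

lemma ThetaF_def (X : Set Ordinal) (ξ : Ordinal) : ThetaF X ξ = sInf (SS X ξ) := by
  rw [ThetaF.eq_def]; rfl

lemma ThetaF_lt_OmegaO (hX : IsClubBelowOmega X) (ξ : Ordinal) : ThetaF X ξ < OmegaO := by
  rcases (SS X ξ).eq_empty_or_nonempty with he | hne
  · rw [ThetaF_def, he, Ordinal.sInf_empty]
    exact OmegaO_pos
  · exact hX.1 _ (ThetaF_def X ξ ▸ csInf_mem hne).1

lemma ThetaF_mem {X : Set Ordinal} {ξ : Ordinal} (hne : (SS X ξ).Nonempty) :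
    ThetaF X ξ ∈ SS X ξ :=
  ThetaF_def X ξ ▸ csInf_mem hne

lemma ThetaF_le {X : Set Ordinal} {ξ θ : Ordinal} (hθ : θ ∈ SS X ξ) : ThetaF X ξ ≤ θ :=
  ThetaF_def X ξ ▸ csInf_le (OrderBot.bddBelow _) hθ

/-- A strict upper bound for the values `Θ_X(ζ)` over `ζ` with small coefficients. -/
lemma ThetaF_bound (hX : IsClubBelowOmega X) {θ : Ordinal} (hθ0 : 0 < θ) (hθ : θ < OmegaO) :
    ∃ g, g < OmegaO ∧ ∀ ζ, ζ < epsOmega → _root_.star ζ < θ → ThetaF X ζ ≤ g := by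
  have hA : {ζ | ζ < epsOmega ∧ _root_.star ζ < θ}.Countable := by
    apply Set.Countable.mono _ ((countable_iUnion (Dset_countable hθ)))
    intro ζ hζ
    exact mem_iUnion_Dset hθ0 ζ hζ.1 hζ.2
  have hAne : {ζ | ζ < epsOmega ∧ _root_.star ζ < θ}.Nonempty :=
    ⟨0, epsOmega_pos, by rwa [star0]⟩
  obtain ⟨e, he⟩ := hA.exists_eq_range hAne
  refine ⟨⨆ n, ThetaF X (e n), iSup_lt_OmegaO (fun n => ThetaF_lt_OmegaO hX _), ?_⟩
  intro ζ hζe hζs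
  have : ζ ∈ range e := he ▸ mem_setOf.2 ⟨hζe, hζs⟩
  obtain ⟨n, rfl⟩ := this
  exact le_ciSup (Ordinal.bddAbove_range _) n

theorem SS_nonempty (hX : IsClubBelowOmega X) (h0X : 0 ∉ X) {ξ : Ordinal}
    (hξ : ξ < epsOmega) (hs : _root_.star ξ < OmegaO) : (SS X ξ).Nonempty := by
  obtain ⟨hXlt, hXub, hXcl⟩ := hX
  -- a choice function for the next element of X
  have hnext : ∀ a : Ordinal, ∃ x, x ∈ X ∧ (a < OmegaO → a < x) := by
    intro a
    rcases lt_or_ge a OmegaO with h | h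
    · obtain ⟨x, hx1, hx2⟩ := hXub a h
      exact ⟨x, hx1, fun _ => hx2⟩
    · obtain ⟨x, hx1, _⟩ := hXub 0 OmegaO_pos
      exact ⟨x, hx1, fun h' => absurd h' (not_lt.2 h)⟩
  choose next hnextX hnextgt using hnext
  -- a bound function
  have hb : ∀ p : Ordinal, ∃ g, (0 < p → p < OmegaO →
      g < OmegaO ∧ ∀ ζ, ζ < epsOmega → _root_.star ζ < p → ThetaF X ζ ≤ g) := by
    intro p
    rcases lt_or_ge (0:Ordinal) p with h0 | h0
    · rcases lt_or_ge p OmegaO with h1 | h1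
      · obtain ⟨g, hg⟩ := ThetaF_bound ⟨hXlt, hXub, hXcl⟩ h0 h1
        exact ⟨g, fun _ _ => hg⟩
      · exact ⟨0, fun _ h => absurd h (not_lt.2 h1)⟩
    · exact ⟨0, fun h _ => absurd h (not_lt.2 h0)⟩
  choose gbd hgbd using hb
  -- the iteration
  set f : ℕ → Ordinal := fun k => Nat.rec (next (_root_.star ξ)) (fun _ p => next (max p (gbd p))) k
    with hf
  have hfX : ∀ k, f k ∈ X := by
    intro k; cases k <;> exact hnextX _
  have hfΩ : ∀ k, f k < OmegaO := fun k => hXlt _ (hfX k)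
  have hf0 : ∀ k, 0 < f k := by
    intro k
    exact pos_iff_ne_zero.2 (fun h => h0X (h ▸ hfX k))
  have hgb : ∀ k, gbd (f k) < OmegaO ∧
      ∀ ζ, ζ < epsOmega → _root_.star ζ < f k → ThetaF X ζ ≤ gbd (f k) :=
    fun k => hgbd (f k) (hf0 k) (hfΩ k)
  have hflt : ∀ k, f k < f (k + 1) := by
    intro k
    have hmax : max (f k) (gbd (f k)) < OmegaO := max_lt (hfΩ k) (hgb k).1
    calc f k ≤ max (f k) (gbd (f k)) := le_max_left _ _
      _ < next (max (f k) (gbd (f k))) := hnextgt _ hmax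
      _ = f (k + 1) := rfl
  have hgblt : ∀ k, gbd (f k) < f (k + 1) := by
    intro k
    have hmax : max (f k) (gbd (f k)) < OmegaO := max_lt (hfΩ k) (hgb k).1
    calc gbd (f k) ≤ max (f k) (gbd (f k)) := le_max_right _ _
      _ < next (max (f k) (gbd (f k))) := hnextgt _ hmax
      _ = f (k + 1) := rfl
  set lam0 := ⨆ k, f k with hlam0
  have hlamOm : lam0 < OmegaO := iSup_lt_OmegaO hfΩ
  have hlamX : lam0 ∈ X := by
    have : sSup (range f) ∈ X := by
      apply hXcl (range f) (range_subset_iff.2 hfX) (range_nonempty f)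
      exact hlamOm
    exact this
  refine ⟨lam0, hlamX, ?_, ?_⟩
  · calc _root_.star ξ < f 0 := hnextgt _ hs
      _ ≤ lam0 := le_ciSup (Ordinal.bddAbove_range _) 0
  · intro ζ hζξ hζs
    obtain ⟨k, hk⟩ := (lt_ciSup_iff (Ordinal.bddAbove_range _)).1 hζs
    calc ThetaF X ζ ≤ gbd (f k) := (hgb k).2 ζ (hζξ.trans hξ) hk
      _ < f (k + 1) := hgblt k
      _ ≤ lam0 := le_ciSup (Ordinal.bddAbove_range _) (k + 1)
/-- `Θ_X(α+β_n) ↗ Θ_X(α+β)` whenever `β_n ↗ β` and `α+β ∈ ε̂_{Ω+1} ∩ Lim \\ FIX(X)`. -/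
theorem stmt8 (X : Set Ordinal) (hX : IsClubBelowOmega X) (h0X : 0 ∉ X)
    (αt α β : Ordinal) (hα : α = OmegaO * αt) (hβ : β < OmegaO)
    (hmem : α + β ∈ hatEps X) (hlim : Order.IsSuccLimit (α + β)) (hfix : α + β ∉ FIXs X)
    (βs : ℕ → Ordinal) (hmono : StrictMono βs) (hsup : (⨆ n, βs n) = β) :
    StrictMono (fun n => ThetaF X (α + βs n)) ∧
    (⨆ n, ThetaF X (α + βs n)) = ThetaF X (α + β) := by
  subst hα
  set α := OmegaO * αt with hαdef
  obtain ⟨hmem1, hmem2⟩ := hmem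
  have hbs_lt : ∀ n, βs n < β := fun n => lt_of_lt_of_le (hmono (Nat.lt_succ_self n))
    (hsup ▸ le_ciSup (Ordinal.bddAbove_range _) (n + 1))
  have hbs_le : ∀ n, βs n ≤ β := fun n => (hbs_lt n).le
  have hβpos : 0 < β := lt_of_le_of_lt (zero_le) (hbs_lt 0)
  have hβlim : Order.IsSuccLimit β := by
    refine Ordinal.isSuccLimit_iff.2 ⟨hβpos.ne', Order.isSuccPrelimit_of_succ_lt fun c hc => ?_⟩
    rw [← hsup] at hc
    obtain ⟨n, hn⟩ := (lt_ciSup_iff (Ordinal.bddAbove_range _)).1 hc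
    calc Order.succ c ≤ βs n := Order.succ_le_of_lt hn
      _ < β := hbs_lt n
  have hξeps : α + β < epsOmega := hmem1
  have hAeps : ∀ n, α + βs n < epsOmega := fun n =>
    lt_of_le_of_lt (add_le_add_right (hbs_le n) α) hξeps
  have hbsΩ : ∀ n, βs n < OmegaO := fun n => (hbs_lt n).trans hβ
  have hstarξ : _root_.star (α + β) = max (_root_.star α) β := by
    rw [hαdef, star_add αt hβ (hαdef ▸ hξeps), star_of_lt_OmegaO hβ]
  have hstarA : ∀ n, _root_.star (α + βs n) = max (_root_.star α) (βs n) := fun n => by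
    rw [hαdef, star_add αt (hbsΩ n) (hαdef ▸ hAeps n), star_of_lt_OmegaO (hbsΩ n)]
  have hThetaEpsΩ : ThetaEps X < OmegaO := iSup_lt_OmegaO (fun n => ThetaF_lt_OmegaO hX _)
  have hstarξΩ : _root_.star (α + β) < OmegaO := hmem2.trans hThetaEpsΩ
  have hsΩ : _root_.star α < OmegaO := by
    refine lt_of_le_of_lt ?_ hstarξΩ
    rw [hstarξ]; exact le_max_left _ _
  have hstarAΩ : ∀ n, _root_.star (α + βs n) < OmegaO := fun n => by
    rw [hstarA n]; exact max_lt hsΩ (hbsΩ n)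
  have hSSA : ∀ n, (SS X (α + βs n)).Nonempty := fun n =>
    SS_nonempty hX h0X (hAeps n) (hstarAΩ n)
  have hSSξ : (SS X (α + β)).Nonempty := SS_nonempty hX h0X hξeps hstarξΩ
  have hTmem : ∀ n, ThetaF X (α + βs n) ∈ SS X (α + βs n) := fun n => ThetaF_mem (hSSA n)
  have hξmem : ThetaF X (α + β) ∈ SS X (α + β) := ThetaF_mem hSSξ
  have hstarA_le : ∀ m n, m ≤ n → _root_.star (α + βs m) ≤ _root_.star (α + βs n) := by
    intro m n h
    rw [hstarA m, hstarA n]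
    exact max_le_max le_rfl (hmono.monotone h)
  have hsm : StrictMono (fun n => ThetaF X (α + βs n)) := by
    apply strictMono_nat_of_lt_succ
    intro n
    exact (hTmem (n + 1)).2.2 _ (add_lt_add_right (hmono (Nat.lt_succ_self n)) α)
      (lt_of_le_of_lt (hstarA_le n (n + 1) (Nat.le_succ n)) (hTmem (n + 1)).2.1)
  set lam := ⨆ n, ThetaF X (α + βs n) with hlam
  have hTle : ∀ n, ThetaF X (α + βs n) ≤ lam := fun n => le_ciSup (Ordinal.bddAbove_range _) n
  have hlamΩ : lam < OmegaO := iSup_lt_OmegaO (fun n => ThetaF_lt_OmegaO hX _)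
  have hlamX : lam ∈ X := hX.2.2 (range fun n => ThetaF X (α + βs n))
      (range_subset_iff.2 fun n => (hTmem n).1) (range_nonempty _) hlamΩ
  have hslam : _root_.star α < lam := by
    calc _root_.star α ≤ _root_.star (α + βs 0) := by rw [hstarA 0]; exact le_max_left _ _
      _ < ThetaF X (α + βs 0) := (hTmem 0).2.1
      _ ≤ lam := hTle 0
  have hβlam : β ≤ lam := by
    rw [← hsup]
    apply ciSup_le
    intro n
    refine le_of_lt (lt_of_le_of_lt ?_ (lt_of_lt_of_le (hTmem n).2.1 (hTle n)))
    rw [hstarA n]; exact le_max_right _ _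
  have hclos : ∀ ζ, ζ < α + β → _root_.star ζ < lam → ThetaF X ζ < lam := by
    intro ζ hζ1 hζ2
    obtain ⟨k1, hk1⟩ := (lt_ciSup_iff (Ordinal.bddAbove_range _)).1 hζ2
    obtain ⟨d, hd, hζd⟩ := (Ordinal.lt_add_iff hβpos.ne').1 hζ1
    rw [← hsup] at hd
    obtain ⟨k2, hk2⟩ := (lt_ciSup_iff (Ordinal.bddAbove_range _)).1 hd
    have hζA : ζ < α + βs (max k1 k2) :=
      lt_of_le_of_lt hζd
        (add_lt_add_right (hk2.trans_le (hmono.monotone (le_max_right k1 k2))) α)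
    have hζs : _root_.star ζ < ThetaF X (α + βs (max k1 k2)) :=
      lt_of_lt_of_le hk1 (hsm.monotone (le_max_left k1 k2))
    calc ThetaF X ζ < ThetaF X (α + βs (max k1 k2)) := (hTmem (max k1 k2)).2.2 ζ hζA hζs
      _ ≤ lam := hTle (max k1 k2)
  have hlamle : lam ≤ ThetaF X (α + β) := by
    apply ciSup_le
    intro n
    refine le_of_lt (hξmem.2.2 _ (add_lt_add_right (hbs_lt n) α) (lt_of_le_of_lt ?_ hξmem.2.1))
    rw [hstarA n, hstarξ]
    exact max_le_max le_rfl (hbs_le n)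
  refine ⟨hsm, ?_⟩
  by_cases hcase : _root_.star (α + β) < lam
  · exact le_antisymm hlamle (ThetaF_le ⟨hlamX, hcase, hclos⟩)
  · exfalso
    push_neg at hcase
    have hlamβ : lam ≤ β := by
      by_contra h
      push_neg at h
      have : _root_.star (α + β) < lam := by
        rw [hstarξ]; exact max_lt hslam h
      exact absurd hcase (not_le.2 this)
    have hβeq : lam = β := le_antisymm hlamβ hβlam
    have hsβ : _root_.star α < β := hβeq ▸ hslam
    have hstarξβ : _root_.star (α + β) = β := by
      rw [hstarξ]; exact max_eq_right hsβ.le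
    apply hfix
    refine ⟨hmem1, ?_, ?_, ?_⟩
    · rw [hαdef, fs_add αt 1 hβpos hβ (hαdef ▸ hξeps), fs_one_of_limit hβlim hβ, ← hαdef,
        hstarξβ, hαdef,
        star_add αt one_lt_OmegaO
          (hαdef ▸ lt_of_le_of_lt (add_le_add_right (Ordinal.one_lt_of_isSuccLimit hβlim).le α) hξeps), starOne]
      exact max_lt (hαdef ▸ hsβ) (Ordinal.one_lt_of_isSuccLimit hβlim)
    · rw [hstarξβ, hαdef, tau_add αt hβpos hβ (hαdef ▸ hξeps), tau_of_limit hβlim hβ]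
    · have hβeps : β < ThetaEps X := by rw [← hstarξβ]; exact hmem2
      have hβeps' : β < ⨆ n : ℕ, ThetaF X (OmegaTow n) := hβeps
      obtain ⟨n, hn⟩ := (lt_ciSup_iff (Ordinal.bddAbove_range _)).1 hβeps'
      have hGmem : OmegaTow n ∈ {ζ | _root_.star ζ < β ∧ β ≤ ThetaF X ζ} := by
        refine ⟨?_, hn.le⟩
        rw [star_OmegaTow n]
        exact (Ordinal.one_lt_of_isSuccLimit hβlim)
      have hGne : {ζ | _root_.star ζ < β ∧ β ≤ ThetaF X ζ}.Nonempty := ⟨_, hGmem⟩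
      set γ := sInf {ζ | _root_.star ζ < β ∧ β ≤ ThetaF X ζ} with hγdef
      have hγG : γ ∈ {ζ | _root_.star ζ < β ∧ β ≤ ThetaF X ζ} := csInf_mem hGne
      have hγeps : γ < epsOmega :=
        lt_of_le_of_lt (csInf_le (OrderBot.bddBelow _) hGmem) (OmegaTow_lt_epsOmega n)
      have hnotmem : ∀ ζ, ζ < γ → _root_.star ζ < β → ThetaF X ζ < β := by
        intro ζ h1 h2
        have hζnot : ζ ∉ {ζ | _root_.star ζ < β ∧ β ≤ ThetaF X ζ} :=
          notMem_of_lt_csInf (hγdef ▸ h1) (OrderBot.bddBelow _)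
        by_contra h
        exact hζnot ⟨h2, not_lt.1 h⟩
      have hγgt : α + β < γ := by
        rcases lt_trichotomy γ (α + β) with h | h | h
        · exfalso
          have h1 : _root_.star γ < lam := by rw [hβeq]; exact hγG.1
          have h2 : ThetaF X γ < β := by rw [← hβeq]; exact hclos γ h h1
          exact absurd hγG.2 (not_le.2 h2)
        · exfalso
          have := hγG.1
          rw [h, hstarξβ] at this
          exact lt_irrefl β this
        · exact h
      have hΘγ : ThetaF X γ = β := by
        refine le_antisymm (ThetaF_le ⟨?_, hγG.1, hnotmem⟩) hγG.2
        rw [← hβeq]; exact hlamX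
      exact ⟨γ, hγgt, hγeps, by rw [hstarξβ, hΘγ]⟩

end
end

section
/- Let α = Ω·α̃ > 0 be a multiple of Ω, β < Ω, and τ = τ(α) < Ω. Suppose α+β ∈ ε̂_{Ω+1} ∩ JUMP(X). If (τ_n)_{n<ω} is a strictly increasing sequence with supremum τ, then the sequence (Θ_X(α[τ_n] + Θ*(α+β)))_{n<ω} is strictly increasing with supremum Θ_X(α+β). -/
open Ordinal Set

noncomputable section
open scoped Classical

section Stage1
universe u

lemma st_lim_ne {a : Ordinal.{u}} (h : Order.IsSuccLimit a) : a ≠ 0 := h.ne_bot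

lemma st_le_add_right (a b : Ordinal.{u}) : a ≤ a + b := le_self_add

lemma st_zero_or_succ_or_limit (o : Ordinal.{u}) :
    o = 0 ∨ (∃ a, o = Order.succ a) ∨ Order.IsSuccLimit o := by
  rcases Ordinal.zero_or_succ_or_isSuccLimit o with h | ⟨a, ha⟩ | h
  · exact Or.inl h
  · exact Or.inr (Or.inl ⟨a, ha.symm⟩)
  · exact Or.inr (Or.inr h)

lemma st_OmegaO_isLimit : Order.IsSuccLimit (OmegaO : Ordinal.{u}) :=
  Cardinal.isSuccLimit_ord (Cardinal.aleph0_le_aleph 1)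

lemma st_add_lt_OmegaO {x y : Ordinal.{u}} (hx : x < OmegaO) (hy : y < OmegaO) :
    x + y < OmegaO := by
  rw [OmegaO, Cardinal.lt_ord] at *
  rw [Ordinal.card_add]
  exact Cardinal.add_lt_of_lt (Cardinal.aleph0_le_aleph 1) hx hy

lemma st_principal_add_opow (a : Ordinal.{u}) :
    Principal (· + ·) ((OmegaO : Ordinal.{u}) ^ a) := by
  have h : Principal (· + ·) (OmegaO : Ordinal.{u}) :=
    fun x y hx hy => st_add_lt_OmegaO hx hy
  rcases Ordinal.principal_add_iff_zero_or_omega0_opow.1 h with h0 | ⟨c, hc⟩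
  · exact absurd h0 OmegaO_pos.ne'
  · rw [← hc, ← Ordinal.opow_mul]
    exact Ordinal.principal_add_omega0_opow _

lemma st_add_lt_opow {a x y : Ordinal.{u}} (hx : x < OmegaO ^ a) (hy : y < OmegaO ^ a) :
    x + y < OmegaO ^ a := st_principal_add_opow a hx hy

lemma st_OmegaO_lt_eps : (OmegaO : Ordinal.{u}) < epsOmega := by
  have := Ordinal.le_nfp (fun a => Ordinal.omega0 ^ a) (OmegaO + 1)
  exact lt_of_lt_of_le (lt_add_one _) this

lemma st_eps_le_of_opow_le {a : Ordinal.{u}} (h : OmegaO ^ a ≤ a) : epsOmega ≤ a := by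
  have ha0 : a ≠ 0 := by
    intro h0; rw [h0] at h
    exact absurd (lt_of_lt_of_le (Ordinal.opow_pos 0 OmegaO_pos) h) (lt_irrefl 0)
  have h1a : 1 ≤ a := Ordinal.one_le_iff_ne_zero.2 ha0
  have hΩa : OmegaO ≤ a := by
    calc OmegaO = OmegaO ^ (1 : Ordinal) := (Ordinal.opow_one _).symm
    _ ≤ OmegaO ^ a := Ordinal.opow_le_opow_right OmegaO_pos h1a
    _ ≤ a := h
  have hne : a ≠ OmegaO := by
    intro he
    rw [he] at h
    have : OmegaO < OmegaO ^ OmegaO := by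
      conv_lhs => rw [← Ordinal.opow_one OmegaO]
      exact (Ordinal.opow_lt_opow_iff_right one_lt_OmegaO).2 one_lt_OmegaO
    exact absurd (lt_of_lt_of_le this h) (lt_irrefl _)
  have hΩ1 : OmegaO + 1 ≤ a := by
    have : OmegaO < a := lt_of_le_of_ne hΩa (Ne.symm hne)
    exact Order.add_one_le_of_lt this
  have hfix : Ordinal.omega0 ^ a ≤ a :=
    le_trans (Ordinal.opow_le_opow_left a omega0_le_OmegaO) h
  exact Ordinal.nfp_le_fp (Ordinal.isNormal_opow Ordinal.one_lt_omega0).monotone hΩ1 hfix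

lemma st_log_lt {ξ : Ordinal.{u}} (h0 : ξ ≠ 0) (hε : ξ < epsOmega) :
    log OmegaO ξ < ξ := by
  rcases lt_or_eq_of_le (Ordinal.log_le_self OmegaO ξ) with h | h
  · exact h
  · exfalso
    have : OmegaO ^ ξ ≤ ξ := by
      conv_lhs => rw [← h]
      exact Ordinal.opow_log_le_self _ h0
    exact absurd hε (not_lt.2 (st_eps_le_of_opow_le this))

lemma st_lt_opow_self {a : Ordinal.{u}} (hε : a < epsOmega) : a < OmegaO ^ a :=
  lt_of_not_ge fun h => absurd hε (not_lt.2 (st_eps_le_of_opow_le h))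

-- normal form data
lemma st_log_eq {a b γ : Ordinal.{u}} (hb0 : b ≠ 0) (hbΩ : b < OmegaO) (hγ : γ < OmegaO ^ a) :
    log OmegaO (OmegaO ^ a * b + γ) = a := by
  rw [Ordinal.log_opow_mul_add one_lt_OmegaO hb0 hγ, Ordinal.log_eq_zero hbΩ, add_zero]

lemma st_div_eq {a b γ : Ordinal.{u}} (hγ : γ < OmegaO ^ a) :
    (OmegaO ^ a * b + γ) / OmegaO ^ a = b := by
  rw [Ordinal.mul_add_div b (Ordinal.opow_ne_zero a OmegaO_pos.ne') γ,
    Ordinal.div_eq_zero_of_lt hγ, add_zero]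

lemma st_mod_eq {a b γ : Ordinal.{u}} (hγ : γ < OmegaO ^ a) :
    (OmegaO ^ a * b + γ) % OmegaO ^ a = γ := by
  rw [Ordinal.mul_add_mod_self, Ordinal.mod_eq_of_lt hγ]

lemma st_star_zero : star (0 : Ordinal.{u}) = 0 := by
  rw [star.eq_def]; simp

lemma st_star_countable {x : Ordinal.{u}} (h0 : x ≠ 0) (hx : x < OmegaO) : star x = x := by
  rw [star.eq_def, dif_neg h0, dif_pos]
  · rw [Ordinal.log_eq_zero hx, Ordinal.opow_zero, Ordinal.mod_one, Ordinal.div_one,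
      st_star_zero, max_self]
    exact max_eq_right (zero_le)
  · rw [Ordinal.log_eq_zero hx]
    exact pos_iff_ne_zero.2 h0

lemma st_star_unfold {ξ : Ordinal.{u}} (h0 : ξ ≠ 0) (hε : ξ < epsOmega) :
    star ξ = max (max (star (log OmegaO ξ)) (star (ξ % OmegaO ^ log OmegaO ξ)))
      (ξ / OmegaO ^ log OmegaO ξ) := by
  rw [star.eq_def, dif_neg h0, dif_pos (st_log_lt h0 hε)]

end Stage1
section Stage2
universe u

lemma st_eps_fp : Ordinal.omega0 ^ (epsOmega : Ordinal.{u}) = epsOmega :=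
  Ordinal.nfp_fp (Ordinal.isNormal_opow Ordinal.one_lt_omega0) _

lemma st_add_lt_eps {x y : Ordinal.{u}} (hx : x < epsOmega) (hy : y < epsOmega) :
    x + y < epsOmega := by
  have := Ordinal.principal_add_omega0_opow (epsOmega : Ordinal.{u})
  rw [st_eps_fp] at this
  exact this hx hy

lemma st_Omega_lt_eps : (OmegaO : Ordinal.{u}) < epsOmega := st_OmegaO_lt_eps

lemma st_ne_zero_of_nf {a b γ : Ordinal.{u}} (hb0 : b ≠ 0) :
    OmegaO ^ a * b + γ ≠ 0 := by
  have : 0 < OmegaO ^ a * b :=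
    mul_pos (Ordinal.opow_pos a OmegaO_pos) (pos_iff_ne_zero.2 hb0)
  exact (lt_of_lt_of_le this (st_le_add_right _ _)).ne'

lemma st_star_lt_Omega {ξ : Ordinal.{u}} (hε : ξ < epsOmega) : star ξ < OmegaO := by
  induction ξ using Ordinal.induction with
  | _ ξ IH =>
    rcases eq_or_ne ξ 0 with rfl | h0
    · rw [st_star_zero]; exact OmegaO_pos
    · rw [st_star_unfold h0 hε]
      have hlog := st_log_lt h0 hε
      have hmod := Ordinal.mod_opow_log_lt_self OmegaO h0
      have hdiv : ξ / OmegaO ^ log OmegaO ξ < OmegaO := by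
        rw [Ordinal.div_lt (Ordinal.opow_ne_zero _ OmegaO_pos.ne')]
        have := Ordinal.lt_opow_succ_log_self one_lt_OmegaO ξ
        rwa [Ordinal.opow_succ] at this
      exact max_lt (max_lt (IH _ hlog (hlog.trans hε)) (IH _ hmod (hmod.trans hε))) hdiv

lemma st_star_eq {a b γ : Ordinal.{u}} (hb0 : b ≠ 0) (hbΩ : b < OmegaO)
    (hγ : γ < OmegaO ^ a) (hε : OmegaO ^ a * b + γ < epsOmega) :
    star (OmegaO ^ a * b + γ) = max (max (star a) (star γ)) b := by
  rw [st_star_unfold (st_ne_zero_of_nf hb0) hε, st_log_eq hb0 hbΩ hγ, st_mod_eq hγ,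
    st_div_eq hγ]

lemma st_star_pos {ξ : Ordinal.{u}} (h0 : ξ ≠ 0) (hε : ξ < epsOmega) : 1 ≤ star ξ := by
  rw [st_star_unfold h0 hε]
  have : (1 : Ordinal) ≤ ξ / OmegaO ^ log OmegaO ξ :=
    Order.one_le_iff_pos.2 ((Ordinal.div_pos (Ordinal.opow_ne_zero _ OmegaO_pos.ne')).2
      (Ordinal.opow_log_le_self _ h0))
  exact le_trans this (le_max_right _ _)

-- `tau` computation lemmas
lemma st_tau_mod {a b γ : Ordinal.{u}} (hb0 : b ≠ 0) (hbΩ : b < OmegaO)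
    (hγ : γ < OmegaO ^ a) (hγ0 : γ ≠ 0) :
    tau (OmegaO ^ a * b + γ) = tau γ := by
  rw [tau.eq_def, st_log_eq hb0 hbΩ hγ, st_mod_eq hγ, dif_neg (st_ne_zero_of_nf hb0),
    dif_pos hγ0]

lemma st_tau_blimit {a b : Ordinal.{u}} (hbl : Order.IsSuccLimit b) (hbΩ : b < OmegaO) :
    tau (OmegaO ^ a * b) = b := by
  have hb0 : b ≠ 0 := (st_lim_ne hbl)
  have hγ : (0 : Ordinal) < OmegaO ^ a := Ordinal.opow_pos a OmegaO_pos
  have hlog : log OmegaO (OmegaO ^ a * b) = a := by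
    have := st_log_eq (a := a) (γ := 0) hb0 hbΩ hγ; rwa [add_zero] at this
  have hdiv : OmegaO ^ a * b / OmegaO ^ a = b := by
    have := st_div_eq (a := a) (b := b) (γ := 0) hγ; rwa [add_zero] at this
  have hmod : OmegaO ^ a * b % OmegaO ^ a = 0 := by
    have := st_mod_eq (a := a) (b := b) (γ := 0) hγ; rwa [add_zero] at this
  have h0 : OmegaO ^ a * b ≠ 0 := by
    have := st_ne_zero_of_nf (a := a) (γ := 0) hb0; rwa [add_zero] at this
  rw [tau.eq_def, dif_neg h0, hlog, hmod, hdiv]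
  rw [dif_neg (by simp : ¬ ((0:Ordinal) ≠ 0)), if_pos hbl]

lemma st_tau_exp {a : Ordinal.{u}} (hal : Order.IsSuccLimit a)
    (hε : OmegaO ^ a < epsOmega) :
    tau (OmegaO ^ a) = tau a := by
  have h0 : (OmegaO : Ordinal.{u}) ^ a ≠ 0 := Ordinal.opow_ne_zero _ OmegaO_pos.ne'
  have hlog : log OmegaO (OmegaO ^ a) = a := Ordinal.log_opow one_lt_OmegaO a
  have haε : a < epsOmega :=
    lt_of_le_of_lt (Ordinal.right_le_opow a one_lt_OmegaO) hε
  have hll : a < OmegaO ^ a := st_lt_opow_self haε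
  rw [tau.eq_def, dif_neg h0, hlog, Ordinal.mod_self, Ordinal.div_self h0]
  rw [dif_neg (by simp : ¬ ((0:Ordinal) ≠ 0)),
    if_neg (Order.not_isSuccLimit_succ (0 : Ordinal.{u}) ∘ (by rw [Order.succ_eq_add_one, zero_add]; exact ·)),
    if_neg (st_lim_ne hal), dif_pos hal, dif_pos hll]

lemma st_tau_countable_limit {x : Ordinal.{u}} (hx : x < OmegaO) (hxl : Order.IsSuccLimit x) :
    tau x = x := by
  have h := st_tau_blimit (a := 0) hxl hx
  rwa [Ordinal.opow_zero, one_mul] at h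

-- `fs` computation lemmas
lemma st_fs_mod {a b γ θ : Ordinal.{u}} (hb0 : b ≠ 0) (hbΩ : b < OmegaO)
    (hγ : γ < OmegaO ^ a) (hγ0 : γ ≠ 0) :
    fs (OmegaO ^ a * b + γ) θ = OmegaO ^ a * b + fs γ θ := by
  have h1 : ¬ (OmegaO ^ a * b + γ ≤ 1) := by
    have : (1 : Ordinal) ≤ OmegaO ^ a * b :=
      Order.one_le_iff_pos.2 (mul_pos (Ordinal.opow_pos a OmegaO_pos)
        (pos_iff_ne_zero.2 hb0))
    have h2 : (1 : Ordinal) < OmegaO ^ a * b + γ := by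
      calc (1:Ordinal) ≤ OmegaO ^ a * b := this
      _ = OmegaO ^ a * b + 0 := (add_zero _).symm
      _ < OmegaO ^ a * b + γ := (add_lt_add_iff_left _).2 (pos_iff_ne_zero.2 hγ0)
    exact not_le.2 h2
  rw [fs.eq_def, st_log_eq hb0 hbΩ hγ, st_mod_eq hγ, st_div_eq hγ, dif_neg h1, dif_pos hγ0]

lemma st_fs_blimit {a b θ : Ordinal.{u}} (hbl : Order.IsSuccLimit b) (hbΩ : b < OmegaO) :
    fs (OmegaO ^ a * b) θ = OmegaO ^ a * θ := by
  have hb0 : b ≠ 0 := (st_lim_ne hbl)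
  have hγ : (0 : Ordinal) < OmegaO ^ a := Ordinal.opow_pos a OmegaO_pos
  have hlog : log OmegaO (OmegaO ^ a * b) = a := by
    have := st_log_eq (a := a) (γ := 0) hb0 hbΩ hγ; rwa [add_zero] at this
  have hdiv : OmegaO ^ a * b / OmegaO ^ a = b := by
    have := st_div_eq (a := a) (b := b) (γ := 0) hγ; rwa [add_zero] at this
  have hmod : OmegaO ^ a * b % OmegaO ^ a = 0 := by
    have := st_mod_eq (a := a) (b := b) (γ := 0) hγ; rwa [add_zero] at this
  have h1 : ¬ (OmegaO ^ a * b ≤ 1) := by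
    have hω : Ordinal.omega0 ≤ b := (Ordinal.omega0_le_of_isSuccLimit hbl)
    have : (1:Ordinal) < b := lt_of_lt_of_le Ordinal.one_lt_omega0 hω
    have : (1:Ordinal) < OmegaO ^ a * b :=
      lt_of_lt_of_le this (Ordinal.le_mul_right b (Ordinal.opow_pos a OmegaO_pos))
    exact not_le.2 this
  rw [fs.eq_def, dif_neg h1, hlog, hmod, hdiv]
  rw [dif_neg (by simp : ¬ ((0:Ordinal) ≠ 0)), if_pos hbl]

lemma st_fs_exp {a θ : Ordinal.{u}} (hal : Order.IsSuccLimit a) (hε : OmegaO ^ a < epsOmega) :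
    fs (OmegaO ^ a) θ = OmegaO ^ (fs a θ) := by
  have h0 : (OmegaO : Ordinal.{u}) ^ a ≠ 0 := Ordinal.opow_ne_zero _ OmegaO_pos.ne'
  have hlog : log OmegaO (OmegaO ^ a) = a := Ordinal.log_opow one_lt_OmegaO a
  have haε : a < epsOmega := lt_of_le_of_lt (Ordinal.right_le_opow a one_lt_OmegaO) hε
  have hll : a < OmegaO ^ a := st_lt_opow_self haε
  have h1 : ¬ (OmegaO ^ a ≤ 1) := by
    have : (OmegaO : Ordinal.{u}) ^ (1:Ordinal) ≤ OmegaO ^ a :=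
      Ordinal.opow_le_opow_right OmegaO_pos (Ordinal.one_le_iff_ne_zero.2 (st_lim_ne hal))
    rw [Ordinal.opow_one] at this
    exact not_le.2 (lt_of_lt_of_le one_lt_OmegaO this)
  rw [fs.eq_def, dif_neg h1, hlog, Ordinal.mod_self, Ordinal.div_self h0]
  rw [dif_neg (by simp : ¬ ((0:Ordinal) ≠ 0)),
    if_neg (Order.not_isSuccLimit_succ (0 : Ordinal.{u}) ∘ (by rw [Order.succ_eq_add_one, zero_add]; exact ·)),
    dif_pos rfl, dif_pos hal, dif_pos hll]

lemma st_fs_bsucc {a b θ : Ordinal.{u}} (hb0 : b ≠ 0) (hbΩ : b + 1 < OmegaO) :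
    fs (OmegaO ^ a * (b + 1)) θ = OmegaO ^ a * b + fs (OmegaO ^ a) θ := by
  have hb10 : b + 1 ≠ 0 := by
    rw [← Order.succ_eq_add_one]; exact (Order.succ_ne_bot b)
  have hγ : (0 : Ordinal) < OmegaO ^ a := Ordinal.opow_pos a OmegaO_pos
  have hlog : log OmegaO (OmegaO ^ a * (b+1)) = a := by
    have := st_log_eq (a := a) (γ := 0) hb10 hbΩ hγ; rwa [add_zero] at this
  have hdiv : OmegaO ^ a * (b+1) / OmegaO ^ a = b+1 := by
    have := st_div_eq (a := a) (b := b+1) (γ := 0) hγ; rwa [add_zero] at this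
  have hmod : OmegaO ^ a * (b+1) % OmegaO ^ a = 0 := by
    have := st_mod_eq (a := a) (b := b+1) (γ := 0) hγ; rwa [add_zero] at this
  have h1 : ¬ (OmegaO ^ a * (b+1) ≤ 1) := by
    have hb1 : (1:Ordinal) < b + 1 := by
      have : (0:Ordinal) < b := pos_iff_ne_zero.2 hb0
      exact lt_of_le_of_lt (Order.one_le_iff_pos.2 this) (lt_add_one b)
    have h2 : (1:Ordinal) < OmegaO ^ a * (b+1) :=
      lt_of_lt_of_le hb1 (Ordinal.le_mul_right (b+1) (Ordinal.opow_pos a OmegaO_pos))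
    exact not_le.2 h2
  have hnl : ¬ Order.IsSuccLimit (b + 1) := by
    rw [← Order.succ_eq_add_one]; exact Order.not_isSuccLimit_succ b
  have hne1 : b + 1 ≠ 1 := by
    intro h
    apply hb0
    have h' : Order.succ b = Order.succ 0 := by
      rw [Order.succ_eq_add_one, Order.succ_eq_add_one, zero_add]; exact h
    exact Order.succ_injective h'
  have hpred : Ordinal.pred (b + 1) = b := by
    rw [← Order.succ_eq_add_one, Ordinal.pred_succ]
  rw [fs.eq_def, dif_neg h1, hlog, hmod, hdiv]
  rw [dif_neg (by simp : ¬ ((0:Ordinal) ≠ 0)), if_neg hnl, dif_neg hne1, hpred]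

lemma st_fs_countable_limit {x θ : Ordinal.{u}} (hx : x < OmegaO) (hxl : Order.IsSuccLimit x) :
    fs x θ = θ := by
  have h := st_fs_blimit (a := 0) (θ := θ) hxl hx
  rwa [Ordinal.opow_zero, one_mul, one_mul] at h

end Stage2
section Stage3
universe u

/-- multiples of `Ω` -/
def stM (δ : Ordinal.{u}) : Prop := ∃ t, δ = OmegaO * t

lemma stM_zero : stM (0 : Ordinal.{u}) := ⟨0, (mul_zero _).symm⟩

lemma st_M_ge {δ : Ordinal.{u}} (hM : stM δ) (h0 : δ ≠ 0) : OmegaO ≤ δ := by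
  obtain ⟨t, rfl⟩ := hM
  have ht : t ≠ 0 := by rintro rfl; simp at h0
  calc OmegaO = OmegaO * 1 := (mul_one _).symm
  _ ≤ OmegaO * t := mul_le_mul_right (Ordinal.one_le_iff_ne_zero.2 ht) _

lemma st_div_log_lt (ξ : Ordinal.{u}) : ξ / OmegaO ^ log OmegaO ξ < OmegaO := by
  rw [Ordinal.div_lt (Ordinal.opow_ne_zero _ OmegaO_pos.ne')]
  have := Ordinal.lt_opow_succ_log_self one_lt_OmegaO ξ
  rwa [Ordinal.opow_succ] at this

lemma st_M_log_pos {δ : Ordinal.{u}} (hM : stM δ) (h0 : δ ≠ 0) : 1 ≤ log OmegaO δ := by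
  rw [← Ordinal.opow_le_iff_le_log one_lt_OmegaO h0, Ordinal.opow_one]
  exact st_M_ge hM h0

lemma st_M_mod {δ : Ordinal.{u}} (hM : stM δ) (h0 : δ ≠ 0) :
    stM (δ % OmegaO ^ log OmegaO δ) := by
  obtain ⟨t, rfl⟩ := hM
  set a := log OmegaO (OmegaO * t) with ha
  have h1a : 1 ≤ a := st_M_log_pos ⟨t, rfl⟩ h0
  have hsum : 1 + (a - 1) = a := Ordinal.add_sub_cancel_of_le h1a
  set a' := a - 1 with ha'
  have hop : (OmegaO : Ordinal.{u}) ^ a = OmegaO * OmegaO ^ a' := by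
    rw [← hsum, Ordinal.opow_add, Ordinal.opow_one]
  have hr : OmegaO * (t % OmegaO ^ a') < OmegaO ^ a := by
    rw [hop]
    exact (mul_lt_mul_iff_of_pos_left OmegaO_pos).2
      (Ordinal.mod_lt t (Ordinal.opow_ne_zero _ OmegaO_pos.ne'))
  have e : OmegaO * t = OmegaO ^ a * (t / OmegaO ^ a') + OmegaO * (t % OmegaO ^ a') := by
    conv_lhs => rw [← Ordinal.div_add_mod t (OmegaO ^ a')]
    rw [mul_add, ← mul_assoc, ← hop]
  rw [e, st_mod_eq hr]
  exact ⟨_, rfl⟩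

lemma st_M_decomp {δ : Ordinal.{u}} (hM : stM δ) (h0 : δ ≠ 0) :
    (δ / OmegaO ^ log OmegaO δ) ≠ 0 ∧ (δ / OmegaO ^ log OmegaO δ) < OmegaO ∧
    δ % OmegaO ^ log OmegaO δ < OmegaO ^ log OmegaO δ ∧ stM (δ % OmegaO ^ log OmegaO δ) ∧
    δ = OmegaO ^ log OmegaO δ * (δ / OmegaO ^ log OmegaO δ) + δ % OmegaO ^ log OmegaO δ := by
  refine ⟨?_, st_div_log_lt δ, Ordinal.mod_lt δ (Ordinal.opow_ne_zero _ OmegaO_pos.ne'),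
    st_M_mod hM h0, (Ordinal.div_add_mod δ _).symm⟩
  exact (pos_iff_ne_zero.1 ((Ordinal.div_pos
    (Ordinal.opow_ne_zero _ OmegaO_pos.ne')).2 (Ordinal.opow_log_le_self _ h0)))

lemma st_max_eq {x y z w : Ordinal.{u}} :
    max (max x (max y w)) z = max (max (max x y) z) w := by
  rw [← max_assoc x y w, max_assoc (max x y) w z, max_comm w z, ← max_assoc]

/-- the key "sum" lemmas: `star`, `tau`, `fs` on `δ + c` with `δ` a multiple of `Ω`. -/
lemma st_SL {δ : Ordinal.{u}} (hM : stM δ) (hε : δ < epsOmega) :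
    ∀ c < OmegaO, star (δ + c) = max (star δ) (star c) ∧
      (c ≠ 0 → tau (δ + c) = tau c) ∧
      (c ≠ 0 → ∀ θ, fs (δ + c) θ = δ + fs c θ) := by
  induction δ using Ordinal.induction with
  | _ δ IH =>
    intro c hc
    rcases eq_or_ne δ 0 with rfl | h0
    · refine ⟨?_, fun _ => by rw [zero_add], fun _ θ => by rw [zero_add, zero_add]⟩
      rw [zero_add, st_star_zero]
      exact (max_eq_right (zero_le)).symm
    · obtain ⟨hb0, hbΩ, hγa, hMγ, hnf⟩ := st_M_decomp hM h0
      set a := log OmegaO δ with hadef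
      set b := δ / OmegaO ^ a with hbdef
      set γ := δ % OmegaO ^ a with hγdef
      have hγδ : γ < δ := Ordinal.mod_opow_log_lt_self OmegaO h0
      have hγε : γ < epsOmega := hγδ.trans hε
      have hΩa : OmegaO ≤ OmegaO ^ a := by
        calc OmegaO = OmegaO ^ (1:Ordinal) := (Ordinal.opow_one _).symm
        _ ≤ OmegaO ^ a := Ordinal.opow_le_opow_right OmegaO_pos (st_M_log_pos hM h0)
      have hγc : γ + c < OmegaO ^ a := st_add_lt_opow hγa (lt_of_lt_of_le hc hΩa)
      have e : δ + c = OmegaO ^ a * b + (γ + c) := by rw [hnf, add_assoc]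
      have hεc : δ + c < epsOmega := st_add_lt_eps hε (hc.trans st_Omega_lt_eps)
      have hIH := IH γ hγδ hMγ hγε c hc
      refine ⟨?_, ?_, ?_⟩
      · rw [e, st_star_eq hb0 hbΩ hγc (e ▸ hεc), hIH.1, hnf, st_star_eq hb0 hbΩ hγa (hnf ▸ hε)]
        exact st_max_eq
      · intro hc0
        have hγc0 : γ + c ≠ 0 := by
          intro h
          exact hc0 (by simpa using (Ordinal.add_eq_zero_iff.1 h).2)
        rw [e, st_tau_mod hb0 hbΩ hγc hγc0, hIH.2.1 hc0]
      · intro hc0 θ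
        have hγc0 : γ + c ≠ 0 := by
          intro h
          exact hc0 (by simpa using (Ordinal.add_eq_zero_iff.1 h).2)
        rw [e, st_fs_mod hb0 hbΩ hγc hγc0, hIH.2.2 hc0 θ, hnf, add_assoc]

-- remaining tau branch lemmas
lemma st_tau_succ_countable {x : Ordinal.{u}} (h0 : x ≠ 0) (hx : x < OmegaO)
    (hnl : ¬ Order.IsSuccLimit x) : tau x = 1 := by
  rw [tau.eq_def, dif_neg h0, Ordinal.log_eq_zero hx]
  rw [Ordinal.opow_zero, Ordinal.mod_one, Ordinal.div_one]
  rw [dif_neg (by simp : ¬ ((0:Ordinal) ≠ 0)), if_neg hnl, if_pos rfl]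

lemma st_tau_bsucc_limit {a b : Ordinal.{u}} (hal : Order.IsSuccLimit a) (hbΩ : b + 1 < OmegaO)
    (hε : OmegaO ^ a * (b + 1) < epsOmega) :
    tau (OmegaO ^ a * (b + 1)) = tau a := by
  have hb10 : b + 1 ≠ 0 := by rw [← Order.succ_eq_add_one]; exact Order.succ_ne_bot b
  have hγ : (0 : Ordinal) < OmegaO ^ a := Ordinal.opow_pos a OmegaO_pos
  have hlog : log OmegaO (OmegaO ^ a * (b+1)) = a := by
    have := st_log_eq (a := a) (γ := 0) hb10 hbΩ hγ; rwa [add_zero] at this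
  have hdiv : OmegaO ^ a * (b+1) / OmegaO ^ a = b+1 := by
    have := st_div_eq (a := a) (b := b+1) (γ := 0) hγ; rwa [add_zero] at this
  have hmod : OmegaO ^ a * (b+1) % OmegaO ^ a = 0 := by
    have := st_mod_eq (a := a) (b := b+1) (γ := 0) hγ; rwa [add_zero] at this
  have h0 : OmegaO ^ a * (b+1) ≠ 0 := by
    have := st_ne_zero_of_nf (a := a) (γ := 0) hb10; rwa [add_zero] at this
  have hnl : ¬ Order.IsSuccLimit (b + 1) := by
    rw [← Order.succ_eq_add_one]; exact Order.not_isSuccLimit_succ b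
  have hll : a < OmegaO ^ a * (b+1) := by
    have h1 : a < OmegaO ^ a := st_lt_opow_self
      (lt_of_le_of_lt (le_trans (Ordinal.right_le_opow a one_lt_OmegaO)
        (Ordinal.le_mul_left _ (pos_iff_ne_zero.2 hb10))) hε)
    exact lt_of_lt_of_le h1 (Ordinal.le_mul_left _ (pos_iff_ne_zero.2 hb10))
  rw [tau.eq_def, dif_neg h0, hlog, hmod, hdiv]
  rw [dif_neg (by simp : ¬ ((0:Ordinal) ≠ 0)), if_neg hnl, if_neg (st_lim_ne hal), dif_pos hal,
    dif_pos hll]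

lemma st_tau_bsucc_succ {a x b : Ordinal.{u}} (hax : a = x + 1) (hbΩ : b + 1 < OmegaO) :
    tau (OmegaO ^ a * (b + 1)) = OmegaO := by
  have hb10 : b + 1 ≠ 0 := by rw [← Order.succ_eq_add_one]; exact Order.succ_ne_bot b
  have hγ : (0 : Ordinal) < OmegaO ^ a := Ordinal.opow_pos a OmegaO_pos
  have hlog : log OmegaO (OmegaO ^ a * (b+1)) = a := by
    have := st_log_eq (a := a) (γ := 0) hb10 hbΩ hγ; rwa [add_zero] at this
  have hdiv : OmegaO ^ a * (b+1) / OmegaO ^ a = b+1 := by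
    have := st_div_eq (a := a) (b := b+1) (γ := 0) hγ; rwa [add_zero] at this
  have hmod : OmegaO ^ a * (b+1) % OmegaO ^ a = 0 := by
    have := st_mod_eq (a := a) (b := b+1) (γ := 0) hγ; rwa [add_zero] at this
  have h0 : OmegaO ^ a * (b+1) ≠ 0 := by
    have := st_ne_zero_of_nf (a := a) (γ := 0) hb10; rwa [add_zero] at this
  have hnl : ¬ Order.IsSuccLimit (b + 1) := by
    rw [← Order.succ_eq_add_one]; exact Order.not_isSuccLimit_succ b
  have ha0 : a ≠ 0 := by
    rw [hax, ← Order.succ_eq_add_one]; exact Order.succ_ne_bot x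
  have hanl : ¬ Order.IsSuccLimit a := by
    rw [hax, ← Order.succ_eq_add_one]; exact Order.not_isSuccLimit_succ x
  rw [tau.eq_def, dif_neg h0, hlog, hmod, hdiv]
  rw [dif_neg (by simp : ¬ ((0:Ordinal) ≠ 0)), if_neg hnl, if_neg ha0, dif_neg hanl]

end Stage3
section Stage4
universe u

/-- the class of ordinals on which the `fs`-recursion is well-behaved -/
def stH (ξ : Ordinal.{u}) : Prop :=
  ξ ≠ 0 ∧ ξ < epsOmega ∧ Order.IsSuccLimit (tau ξ) ∧ tau ξ < OmegaO

lemma st_not_isLimit_one : ¬ Order.IsSuccLimit (1 : Ordinal.{u}) := by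
  rw [← Ordinal.succ_zero]; exact Order.not_isSuccLimit_succ 0

lemma st_M_opow {a : Ordinal.{u}} (ha : a ≠ 0) : stM (OmegaO ^ a) := by
  have h1a : (1:Ordinal) ≤ a := Ordinal.one_le_iff_ne_zero.2 ha
  refine ⟨OmegaO ^ (a - 1), ?_⟩
  conv_lhs => rw [← Ordinal.add_sub_cancel_of_le h1a]
  rw [Ordinal.opow_add, Ordinal.opow_one]

lemma st_M_add {x y : Ordinal.{u}} (hx : stM x) (hy : stM y) : stM (x + y) := by
  obtain ⟨s, rfl⟩ := hx; obtain ⟨t, rfl⟩ := hy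
  exact ⟨s + t, (mul_add _ _ _).symm⟩

lemma st_M_mul {x y : Ordinal.{u}} (hx : stM x) : stM (x * y) := by
  obtain ⟨s, rfl⟩ := hx
  exact ⟨s * y, mul_assoc _ _ _⟩

lemma st_H_cases {ξ : Ordinal.{u}} (hH : stH ξ) :
    (∃ a b γ : Ordinal.{u}, ξ = OmegaO ^ a * b + γ ∧ b ≠ 0 ∧ b < OmegaO ∧ γ ≠ 0 ∧ γ < OmegaO ^ a ∧
      γ < ξ ∧ stH γ ∧ tau γ = tau ξ ∧ (stM ξ → stM γ ∧ a ≠ 0)) ∨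
    (∃ a : Ordinal.{u}, ξ = OmegaO ^ a * tau ξ ∧ (stM ξ → a ≠ 0)) ∨
    (∃ a b' : Ordinal.{u}, ξ = OmegaO ^ a * (b' + 1) ∧ b' ≠ 0 ∧ b' + 1 < OmegaO ∧ Order.IsSuccLimit a ∧
      stH (OmegaO ^ a) ∧ tau (OmegaO ^ a) = tau ξ ∧ OmegaO ^ a < ξ) ∨
    (∃ a : Ordinal.{u}, ξ = OmegaO ^ a ∧ Order.IsSuccLimit a ∧ stH a ∧ tau a = tau ξ ∧ a < ξ) := by
  obtain ⟨h0, hε, hτl, hτΩ⟩ := hH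
  set a := log OmegaO ξ with hadef
  set b := ξ / OmegaO ^ a with hbdef
  set γ := ξ % OmegaO ^ a with hγdef
  have hbpos : 0 < b := (Ordinal.div_pos
    (Ordinal.opow_ne_zero _ OmegaO_pos.ne')).2 (Ordinal.opow_log_le_self _ h0)
  have hb0 : b ≠ 0 := hbpos.ne'
  have hbΩ : b < OmegaO := st_div_log_lt ξ
  have hγa : γ < OmegaO ^ a := Ordinal.mod_lt ξ (Ordinal.opow_ne_zero _ OmegaO_pos.ne')
  have hnf : ξ = OmegaO ^ a * b + γ := (Ordinal.div_add_mod ξ _).symm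
  have hγξ : γ < ξ := Ordinal.mod_opow_log_lt_self OmegaO h0
  rcases eq_or_ne γ 0 with hγ0 | hγ0
  · -- γ = 0
    have hξab : ξ = OmegaO ^ a * b := by rw [hnf, hγ0, add_zero]
    rcases st_zero_or_succ_or_limit b with hb | ⟨b', hb⟩ | hbl
    · exact absurd hb hb0
    · rw [Order.succ_eq_add_one] at hb
      have hb'Ω : b' + 1 < OmegaO := hb ▸ hbΩ
      rcases st_zero_or_succ_or_limit a with ha | ⟨x, hax⟩ | hal
      · -- a = 0 : ξ countable successor, tau ξ = 1, contradiction
        exfalso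
        have hξc : ξ = b' + 1 := by rw [hξab, hb, ha, Ordinal.opow_zero, one_mul]
        have : tau ξ = 1 := by
          apply st_tau_succ_countable h0
          · rw [hξc]; exact hb'Ω
          · rw [hξc, ← Order.succ_eq_add_one]; exact Order.not_isSuccLimit_succ b'
        rw [this] at hτl
        exact st_not_isLimit_one hτl
      · -- a successor : tau ξ = Ω, contradiction
        exfalso
        rw [Order.succ_eq_add_one] at hax
        have : tau ξ = OmegaO := by
          rw [hξab, hb]; exact st_tau_bsucc_succ hax hb'Ω
        rw [this] at hτΩ
        exact lt_irrefl _ hτΩ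
      · -- a limit
        have haε : a < epsOmega := by
          refine lt_of_lt_of_le ?_ (le_of_lt hε)
          calc a < OmegaO ^ a := st_lt_opow_self (lt_of_le_of_lt (le_trans
            (Ordinal.right_le_opow a one_lt_OmegaO) (by
              rw [hξab, hb]
              exact Ordinal.le_mul_left _ (pos_iff_ne_zero.2 (by
                rw [← Order.succ_eq_add_one]; exact Order.succ_ne_bot b')))) hε)
          _ ≤ ξ := by
            rw [hξab, hb]
            exact le_trans (Ordinal.le_mul_left _ (pos_iff_ne_zero.2 (by
              rw [← Order.succ_eq_add_one]; exact Order.succ_ne_bot b'))) le_rfl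
        have hΩaξ : OmegaO ^ a ≤ ξ := by
          rw [hξab, hb]
          exact Ordinal.le_mul_left _ (pos_iff_ne_zero.2 (by
            rw [← Order.succ_eq_add_one]; exact Order.succ_ne_bot b'))
        rcases eq_or_ne b' 0 with hb'0 | hb'0
        · -- case 4
          have hξa : ξ = OmegaO ^ a := by rw [hξab, hb, hb'0, zero_add, mul_one]
          have htaua : tau a = tau ξ := by rw [hξa]; exact (st_tau_exp hal (hξa ▸ hε)).symm
          refine Or.inr (Or.inr (Or.inr ⟨a, hξa, hal, ⟨(st_lim_ne hal), haε, ?_, ?_⟩, htaua, ?_⟩))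
          · rw [htaua]; exact hτl
          · rw [htaua]; exact hτΩ
          · rw [hξa]; exact st_lt_opow_self haε
        · -- case 3
          have hεa : OmegaO ^ a < epsOmega := lt_of_le_of_lt hΩaξ hε
          have htaua : tau (OmegaO ^ a) = tau ξ := by
            rw [st_tau_exp hal hεa, hξab, hb, st_tau_bsucc_limit hal hb'Ω (by
              rw [← hb, ← hξab]; exact hε)]
          refine Or.inr (Or.inr (Or.inl ⟨a, b', by rw [hξab, hb], hb'0, hb'Ω, hal,
            ⟨Ordinal.opow_ne_zero _ OmegaO_pos.ne', hεa, ?_, ?_⟩, htaua, ?_⟩))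
          · rw [htaua]; exact hτl
          · rw [htaua]; exact hτΩ
          · rw [hξab, hb]
            conv_lhs => rw [← mul_one (OmegaO ^ a)]
            refine (mul_lt_mul_iff_of_pos_left (Ordinal.opow_pos a OmegaO_pos)).2 ?_
            have : (0:Ordinal) < b' := pos_iff_ne_zero.2 hb'0
            calc (1:Ordinal) = 0 + 1 := (zero_add 1).symm
            _ < b' + 1 := by
              rw [← Order.succ_eq_add_one, ← Order.succ_eq_add_one]
              exact Order.succ_lt_succ this
    · -- b limit : case 2
      have htb : tau ξ = b := by rw [hξab]; exact st_tau_blimit hbl hbΩ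
      refine Or.inr (Or.inl ⟨a, by rw [htb, ← hξab], fun hM => ?_⟩)
      intro ha0
      have : ξ < OmegaO := by
        rw [hξab, ha0, Ordinal.opow_zero, one_mul]; exact hbΩ
      exact absurd (st_M_ge hM h0) (not_le.2 this)
  · -- γ ≠ 0 : case 1
    have hγε : γ < epsOmega := hγξ.trans hε
    have htγ : tau γ = tau ξ := by
      conv_rhs => rw [hnf]
      rw [st_tau_mod hb0 hbΩ hγa hγ0]
    refine Or.inl ⟨a, b, γ, hnf, hb0, hbΩ, hγ0, hγa, hγξ, ⟨hγ0, hγε, ?_, ?_⟩, htγ,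
      fun hM => ⟨st_M_mod hM h0, ?_⟩⟩
    · rw [htγ]; exact hτl
    · rw [htγ]; exact hτΩ
    · exact fun h => absurd (st_M_log_pos hM h0) (by rw [← hadef, h]; simp)

/-- `fs ξ` is strictly monotone below `tau ξ` -/
lemma st_fs_strictMono {ξ : Ordinal.{u}} (hH : stH ξ) :
    ∀ θ' θ'', θ' < θ'' → θ'' ≤ tau ξ → fs ξ θ' < fs ξ θ'' := by
  induction ξ using Ordinal.induction with
  | _ ξ IH =>
    intro θ' θ'' h h2
    rcases st_H_cases hH with
      ⟨a, b, γ, hnf, hb0, hbΩ, hγ0, hγa, hγξ, hHγ, htγ, _⟩ |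
      ⟨a, hnf, _⟩ |
      ⟨a, b', hnf, hb'0, hbΩ, hal, hHa, htaua, hlt⟩ |
      ⟨a, hnf, hal, hHa, htaua, hlt⟩
    · have e1 := st_fs_mod (θ := θ') hb0 hbΩ hγa hγ0
      have e2 := st_fs_mod (θ := θ'') hb0 hbΩ hγa hγ0
      rw [← hnf] at e1 e2
      rw [e1, e2]
      exact (add_lt_add_iff_left _).2 (IH γ hγξ hHγ θ' θ'' h (htγ ▸ h2))
    · have e1 := st_fs_blimit (a := a) (θ := θ') hH.2.2.1 hH.2.2.2
      have e2 := st_fs_blimit (a := a) (θ := θ'') hH.2.2.1 hH.2.2.2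
      rw [← hnf] at e1 e2
      rw [e1, e2]
      exact (mul_lt_mul_iff_of_pos_left (Ordinal.opow_pos a OmegaO_pos)).2 h
    · have e1 := st_fs_bsucc (a := a) (θ := θ') hb'0 hbΩ
      have e2 := st_fs_bsucc (a := a) (θ := θ'') hb'0 hbΩ
      rw [← hnf] at e1 e2
      rw [e1, e2]
      exact (add_lt_add_iff_left _).2 (IH _ hlt hHa θ' θ'' h (htaua ▸ h2))
    · have e1 := st_fs_exp (θ := θ') hal (hnf ▸ hH.2.1)
      have e2 := st_fs_exp (θ := θ'') hal (hnf ▸ hH.2.1)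
      rw [← hnf] at e1 e2
      rw [e1, e2]
      exact (Ordinal.opow_lt_opow_iff_right one_lt_OmegaO).2
        (IH a hlt hHa θ' θ'' h (htaua ▸ h2))

/-- `fs ξ (tau ξ) = ξ` -/
lemma st_fs_tau {ξ : Ordinal.{u}} (hH : stH ξ) : fs ξ (tau ξ) = ξ := by
  induction ξ using Ordinal.induction with
  | _ ξ IH =>
    rcases st_H_cases hH with
      ⟨a, b, γ, hnf, hb0, hbΩ, hγ0, hγa, hγξ, hHγ, htγ, _⟩ |
      ⟨a, hnf, _⟩ |
      ⟨a, b', hnf, hb'0, hbΩ, hal, hHa, htaua, hlt⟩ |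
      ⟨a, hnf, hal, hHa, htaua, hlt⟩
    · have e := st_fs_mod (θ := tau ξ) hb0 hbΩ hγa hγ0
      rw [← hnf] at e
      rw [e, ← htγ, IH γ hγξ hHγ, ← hnf]
    · have e := st_fs_blimit (a := a) (θ := tau ξ) hH.2.2.1 hH.2.2.2
      rw [← hnf] at e
      rw [e]
    · have e := st_fs_bsucc (a := a) (θ := tau ξ) hb'0 hbΩ
      rw [← hnf] at e
      have e2 : fs (OmegaO ^ a) (tau ξ) = OmegaO ^ a := by
        rw [← htaua, IH _ hlt hHa]
      rw [e, e2, ← Ordinal.mul_succ, Order.succ_eq_add_one, ← hnf]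
    · have e := st_fs_exp (θ := tau ξ) hal (hnf ▸ hH.2.1)
      rw [← hnf] at e
      have e2 : fs a (tau ξ) = a := by rw [← htaua, IH a hlt hHa]
      rw [e, e2, ← hnf]

lemma st_fs_le {ξ θ : Ordinal.{u}} (hH : stH ξ) (hθ : θ ≤ tau ξ) : fs ξ θ ≤ ξ := by
  rcases eq_or_lt_of_le hθ with rfl | h
  · exact le_of_eq (st_fs_tau hH)
  · have := st_fs_strictMono hH θ (tau ξ) h le_rfl
    rw [st_fs_tau hH] at this
    exact le_of_lt this

lemma st_fs_lt {ξ θ : Ordinal.{u}} (hH : stH ξ) (hθ : θ < tau ξ) : fs ξ θ < ξ := by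
  have := st_fs_strictMono hH θ (tau ξ) hθ le_rfl
  rwa [st_fs_tau hH] at this

lemma st_fs_pos {ξ θ : Ordinal.{u}} (hH : stH ξ) (hθ : θ ≠ 0) : 0 < fs ξ θ := by
  rcases st_H_cases hH with
    ⟨a, b, γ, hnf, hb0, hbΩ, hγ0, hγa, hγξ, hHγ, htγ, _⟩ |
    ⟨a, hnf, _⟩ |
    ⟨a, b', hnf, hb'0, hbΩ, hal, hHa, htaua, hlt⟩ |
    ⟨a, hnf, hal, hHa, htaua, hlt⟩
  · have e := st_fs_mod (θ := θ) hb0 hbΩ hγa hγ0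
    rw [← hnf] at e
    rw [e]
    exact lt_of_lt_of_le (mul_pos (Ordinal.opow_pos a OmegaO_pos)
      (pos_iff_ne_zero.2 hb0)) (st_le_add_right _ _)
  · have e := st_fs_blimit (a := a) (θ := θ) hH.2.2.1 hH.2.2.2
    rw [← hnf] at e
    rw [e]
    exact mul_pos (Ordinal.opow_pos a OmegaO_pos) (pos_iff_ne_zero.2 hθ)
  · have e := st_fs_bsucc (a := a) (θ := θ) hb'0 hbΩ
    rw [← hnf] at e
    rw [e]
    exact lt_of_lt_of_le (mul_pos (Ordinal.opow_pos a OmegaO_pos)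
      (pos_iff_ne_zero.2 hb'0)) (st_le_add_right _ _)
  · have e := st_fs_exp (θ := θ) hal (hnf ▸ hH.2.1)
    rw [← hnf] at e
    rw [e]
    exact Ordinal.opow_pos _ OmegaO_pos

end Stage4
section Stage5
universe u

lemma st_star_eq0 {a b : Ordinal.{u}} (hb0 : b ≠ 0) (hbΩ : b < OmegaO)
    (hε : OmegaO ^ a * b < epsOmega) :
    star (OmegaO ^ a * b) = max (star a) b := by
  have h := st_star_eq (a := a) (b := b) (γ := 0) hb0 hbΩ (Ordinal.opow_pos a OmegaO_pos)
    (by rwa [add_zero])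
  rw [add_zero] at h
  rw [h, st_star_zero, max_eq_left (zero_le)]

lemma st_star_opow {a : Ordinal.{u}} (hε : OmegaO ^ a < epsOmega) :
    star (OmegaO ^ a) = max (star a) 1 := by
  have := st_star_eq0 (a := a) (b := 1) one_ne_zero one_lt_OmegaO (by rwa [mul_one])
  rwa [mul_one] at this

/-- coefficient bound for `fs`. -/
lemma st_star_fs {ξ : Ordinal.{u}} (hH : stH ξ) :
    ∀ θ, θ ≤ tau ξ → star (fs ξ θ) ≤ max (star ξ) θ := by
  induction ξ using Ordinal.induction with
  | _ ξ IH =>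
    intro θ hθ
    have hε := hH.2.1
    have hτΩ := hH.2.2.2
    have hθΩ : θ < OmegaO := lt_of_le_of_lt hθ hτΩ
    rcases st_H_cases hH with
      ⟨a, b, γ, hnf, hb0, hbΩ, hγ0, hγa, hγξ, hHγ, htγ, _⟩ |
      ⟨a, hnf, _⟩ |
      ⟨a, b', hnf, hb'0, hbΩ, hal, hHa, htaua, hlt⟩ |
      ⟨a, hnf, hal, hHa, htaua, hlt⟩
    · have e := st_fs_mod (θ := θ) hb0 hbΩ hγa hγ0
      rw [← hnf] at e
      have hsξ : star ξ = max (max (star a) (star γ)) b := by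
        conv_lhs => rw [hnf]
        exact st_star_eq hb0 hbΩ hγa (hnf ▸ hε)
      have hfsγ : fs γ θ ≤ γ := st_fs_le hHγ (htγ ▸ hθ)
      have hfsγa : fs γ θ < OmegaO ^ a := lt_of_le_of_lt hfsγ hγa
      have hfse : OmegaO ^ a * b + fs γ θ < epsOmega := by
        refine lt_of_le_of_lt (add_le_add_right hfsγ _) ?_
        rw [← hnf]; exact hε
      have hIH := IH γ hγξ hHγ θ (htγ ▸ hθ)
      rw [e, st_star_eq hb0 hbΩ hfsγa hfse, hsξ]
      set R := max (max (max (star a) (star γ)) b) θ with hR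
      have hsa : star a ≤ R := le_trans (le_max_left _ _)
        (le_trans (le_max_left _ _) (le_max_left _ _))
      have hsγ : star γ ≤ R := le_trans (le_max_right _ _)
        (le_trans (le_max_left _ _) (le_max_left _ _))
      have hbR : b ≤ R := le_trans (le_max_right _ _) (le_max_left _ _)
      have hθR : θ ≤ R := le_max_right _ _
      exact max_le (max_le hsa (le_trans hIH (max_le hsγ hθR))) hbR
    · have e := st_fs_blimit (a := a) (θ := θ) hH.2.2.1 hτΩ
      rw [← hnf] at e
      rw [e]
      rcases eq_or_ne θ 0 with rfl | hθ0
      · rw [mul_zero, st_star_zero]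
        exact zero_le
      · have hεaθ : OmegaO ^ a * θ < epsOmega := by
          refine lt_of_le_of_lt (mul_le_mul_right hθ _) ?_
          rw [← hnf]; exact hε
        have hsξ : star ξ = max (star a) (tau ξ) := by
          conv_lhs => rw [hnf]
          exact st_star_eq0 (st_lim_ne hH.2.2.1) hτΩ (hnf ▸ hε)
        rw [st_star_eq0 hθ0 hθΩ hεaθ, hsξ]
        exact max_le (le_trans (le_max_left _ _) (le_max_left _ _)) (le_max_right _ _)
    · have e := st_fs_bsucc (a := a) (θ := θ) hb'0 hbΩ
      rw [← hnf] at e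
      have hsξ : star ξ = max (star a) (b' + 1) := by
        conv_lhs => rw [hnf]
        exact st_star_eq0 (by rw [← Order.succ_eq_add_one]; exact Order.succ_ne_bot b')
          hbΩ (hnf ▸ hε)
      have hb'Ω : b' < OmegaO := lt_trans (lt_of_lt_of_le (lt_add_one b') le_rfl) hbΩ
      have h1b : (1:Ordinal) ≤ b' + 1 := by
        calc (1:Ordinal) = 0 + 1 := (zero_add 1).symm
        _ ≤ b' + 1 := add_le_add_left (zero_le) 1
      have hfsa : fs (OmegaO ^ a) θ ≤ OmegaO ^ a := st_fs_le hHa (htaua ▸ hθ)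
      have hIH := IH _ hlt hHa θ (htaua ▸ hθ)
      have hsΩa : star (OmegaO ^ a) = max (star a) 1 := st_star_opow hHa.2.1
      rcases eq_or_lt_of_le hfsa with heq | hlt2
      · -- fs ξ θ = ξ
        rw [e, heq, ← Ordinal.mul_succ, Order.succ_eq_add_one, ← hnf]
        exact le_max_left _ _
      · set R := max (max (star a) (b' + 1)) θ with hR
        have hsaR : star a ≤ R := le_trans (le_max_left _ _) (le_max_left _ _)
        have hb1R : b' + 1 ≤ R := le_trans (le_max_right _ _) (le_max_left _ _)
        have hθR : θ ≤ R := le_max_right _ _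
        have h1R : (1:Ordinal) ≤ R := le_trans h1b hb1R
        rw [e, hsξ]
        rcases eq_or_ne (fs (OmegaO ^ a) θ) 0 with hz | hz
        · rw [hz, add_zero, st_star_eq0 hb'0 hb'Ω (by
            refine lt_of_le_of_lt ?_ hε
            rw [hnf]
            exact mul_le_mul_right (le_of_lt (lt_add_one b')) _)]
          exact max_le hsaR (le_trans (le_of_lt (lt_add_one b')) hb1R)
        · have hfse : OmegaO ^ a * b' + fs (OmegaO ^ a) θ < epsOmega := by
            refine lt_of_le_of_lt (add_le_add_right hfsa _) ?_
            rw [← Ordinal.mul_succ, Order.succ_eq_add_one, ← hnf]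
            exact hε
          rw [st_star_eq hb'0 hb'Ω hlt2 hfse]
          refine max_le (max_le hsaR ?_) (le_trans (le_of_lt (lt_add_one b')) hb1R)
          refine le_trans (IH _ hlt hHa θ (htaua ▸ hθ)) ?_
          rw [hsΩa]
          exact max_le (max_le hsaR h1R) hθR
    · have e := st_fs_exp (θ := θ) hal (hnf ▸ hε)
      rw [← hnf] at e
      have hsξ : star ξ = max (star a) 1 := by
        conv_lhs => rw [hnf]
        exact st_star_opow (hnf ▸ hε)
      have hIH := IH a hlt hHa θ (htaua ▸ hθ)
      rw [e, hsξ]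
      set R := max (max (star a) 1) θ with hR
      have hsaR : star a ≤ R := le_trans (le_max_left _ _) (le_max_left _ _)
      have h1R : (1:Ordinal) ≤ R := le_trans (le_max_right _ _) (le_max_left _ _)
      have hθR : θ ≤ R := le_max_right _ _
      rcases eq_or_ne (fs a θ) 0 with hz | hz
      · rw [hz, Ordinal.opow_zero, st_star_countable one_ne_zero one_lt_OmegaO]
        exact h1R
      · have hfse : OmegaO ^ fs a θ < epsOmega := by
          rw [← e]
          exact lt_of_le_of_lt (st_fs_le hH hθ) hε
        rw [st_star_opow hfse]
        exact max_le (le_trans hIH (max_le hsaR hθR)) h1R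

lemma st_tau_le_star {ξ : Ordinal.{u}} (hH : stH ξ) : tau ξ ≤ star ξ := by
  induction ξ using Ordinal.induction with
  | _ ξ IH =>
    have hε := hH.2.1
    rcases st_H_cases hH with
      ⟨a, b, γ, hnf, hb0, hbΩ, hγ0, hγa, hγξ, hHγ, htγ, _⟩ |
      ⟨a, hnf, _⟩ |
      ⟨a, b', hnf, hb'0, hbΩ, hal, hHa, htaua, hlt⟩ |
      ⟨a, hnf, hal, hHa, htaua, hlt⟩
    · have hsξ : star ξ = max (max (star a) (star γ)) b := by
        conv_lhs => rw [hnf]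
        exact st_star_eq hb0 hbΩ hγa (hnf ▸ hε)
      rw [hsξ, ← htγ]
      exact le_trans (IH γ hγξ hHγ) (le_trans (le_max_right _ _) (le_max_left _ _))
    · have hsξ : star ξ = max (star a) (tau ξ) := by
        conv_lhs => rw [hnf]
        exact st_star_eq0 (st_lim_ne hH.2.2.1) hH.2.2.2 (hnf ▸ hε)
      rw [hsξ]
      exact le_max_right _ _
    · have hsξ : star ξ = max (star a) (b' + 1) := by
        conv_lhs => rw [hnf]
        exact st_star_eq0 (by rw [← Order.succ_eq_add_one]; exact Order.succ_ne_bot b')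
          hbΩ (hnf ▸ hε)
      rw [hsξ, ← htaua]
      refine le_trans (IH _ hlt hHa) ?_
      rw [st_star_opow hHa.2.1]
      refine max_le (le_max_left _ _) ?_
      refine le_trans ?_ (le_max_right _ _)
      calc (1:Ordinal) = 0 + 1 := (zero_add 1).symm
      _ ≤ b' + 1 := add_le_add_left (zero_le) 1
    · have hsξ : star ξ = max (star a) 1 := by
        conv_lhs => rw [hnf]
        exact st_star_opow (hnf ▸ hε)
      rw [hsξ, ← htaua]
      exact le_trans (IH a hlt hHa) (le_max_left _ _)

/-- cofinality of the fundamental sequence -/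
lemma st_fs_cofinal {ξ : Ordinal.{u}} (hH : stH ξ) :
    ∀ ζ < ξ, ∃ θ, θ < tau ξ ∧ ζ < fs ξ θ := by
  induction ξ using Ordinal.induction with
  | _ ξ IH =>
    intro ζ hζ
    have hτl := hH.2.2.1
    rcases eq_or_ne ζ 0 with rfl | hζ0
    · exact ⟨1, (lt_of_lt_of_le Ordinal.one_lt_omega0 (Ordinal.omega0_le_of_isSuccLimit hτl)), st_fs_pos hH one_ne_zero⟩
    rcases st_H_cases hH with
      ⟨a, b, γ, hnf, hb0, hbΩ, hγ0, hγa, hγξ, hHγ, htγ, _⟩ |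
      ⟨a, hnf, _⟩ |
      ⟨a, b', hnf, hb'0, hbΩ, hal, hHa, htaua, hlt⟩ |
      ⟨a, hnf, hal, hHa, htaua, hlt⟩
    · rcases lt_or_ge ζ (OmegaO ^ a * b) with h | h
      · refine ⟨1, (lt_of_lt_of_le Ordinal.one_lt_omega0 (Ordinal.omega0_le_of_isSuccLimit hτl)), ?_⟩
        have e := st_fs_mod (θ := 1) hb0 hbΩ hγa hγ0
        rw [← hnf] at e
        rw [e]
        exact lt_of_lt_of_le h (st_le_add_right _ _)
      · have hsub : ζ - OmegaO ^ a * b < γ := by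
          have h2 := Ordinal.add_sub_cancel_of_le h
          rw [hnf, ← h2, add_lt_add_iff_left] at hζ
          exact hζ
        obtain ⟨θ, hθτ, hθ⟩ := IH γ hγξ hHγ (ζ - OmegaO ^ a * b) hsub
        refine ⟨θ, htγ ▸ hθτ, ?_⟩
        have e := st_fs_mod (θ := θ) hb0 hbΩ hγa hγ0
        rw [← hnf] at e
        rw [e, ← Ordinal.add_sub_cancel_of_le h]
        exact (add_lt_add_iff_left _).2 hθ
    · -- b = tau ξ limit
      have hζ' : ζ < OmegaO ^ a * tau ξ := hnf ▸ hζ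
      have hc : ζ / OmegaO ^ a < tau ξ :=
        (Ordinal.div_lt (Ordinal.opow_ne_zero _ OmegaO_pos.ne')).2 hζ'
      refine ⟨ζ / OmegaO ^ a + 1, ?_, ?_⟩
      · rw [← Order.succ_eq_add_one]
        exact hτl.succ_lt hc
      · have e := st_fs_blimit (a := a) (θ := ζ / OmegaO ^ a + 1) hτl hH.2.2.2
        rw [← hnf] at e
        rw [e, ← Order.succ_eq_add_one]
        exact Ordinal.lt_mul_succ_div ζ (Ordinal.opow_ne_zero _ OmegaO_pos.ne')
    · rcases lt_or_ge ζ (OmegaO ^ a * b') with h | h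
      · refine ⟨1, (lt_of_lt_of_le Ordinal.one_lt_omega0 (Ordinal.omega0_le_of_isSuccLimit hτl)), ?_⟩
        have e := st_fs_bsucc (a := a) (θ := 1) hb'0 hbΩ
        rw [← hnf] at e
        rw [e]
        exact lt_of_lt_of_le h (st_le_add_right _ _)
      · have hsub : ζ - OmegaO ^ a * b' < OmegaO ^ a := by
          have h2 := Ordinal.add_sub_cancel_of_le h
          have hζ' : ζ < OmegaO ^ a * b' + OmegaO ^ a := by
            rw [← Ordinal.mul_succ, Order.succ_eq_add_one, ← hnf]
            exact hζ
          rw [← h2, add_lt_add_iff_left] at hζ'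
          exact hζ'
        obtain ⟨θ, hθτ, hθ⟩ := IH _ hlt hHa (ζ - OmegaO ^ a * b') hsub
        refine ⟨θ, htaua ▸ hθτ, ?_⟩
        have e := st_fs_bsucc (a := a) (θ := θ) hb'0 hbΩ
        rw [← hnf] at e
        rw [e, ← Ordinal.add_sub_cancel_of_le h]
        exact (add_lt_add_iff_left _).2 hθ
    · -- ξ = Ω^a
      have hζ' : ζ < OmegaO ^ a := hnf ▸ hζ
      have hlog : log OmegaO ζ < a := (Ordinal.lt_opow_iff_log_lt one_lt_OmegaO hζ0).1 hζ'
      obtain ⟨θ, hθτ, hθ⟩ := IH a hlt hHa (log OmegaO ζ) hlog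
      have hθ1τ : θ + 1 < tau a := by
        rw [← Order.succ_eq_add_one]
        exact (htaua ▸ hτl : Order.IsSuccLimit (tau a)).succ_lt hθτ
      have hmono : fs a θ < fs a (θ + 1) :=
        st_fs_strictMono hHa θ (θ + 1) (lt_add_one θ) (le_of_lt hθ1τ)
      refine ⟨θ + 1, htaua ▸ hθ1τ, ?_⟩
      have e := st_fs_exp (θ := θ + 1) hal (hnf ▸ hH.2.1)
      rw [← hnf] at e
      rw [e]
      calc ζ < OmegaO ^ Order.succ (log OmegaO ζ) :=
        Ordinal.lt_opow_succ_log_self one_lt_OmegaO ζ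
      _ ≤ OmegaO ^ fs a (θ + 1) := by
        refine Ordinal.opow_le_opow_right OmegaO_pos ?_
        rw [Order.succ_eq_add_one]
        exact Order.add_one_le_of_lt (lt_trans hθ hmono)

lemma st_one_add_OmegaO : (1 : Ordinal.{u}) + OmegaO = OmegaO := by
  have h : Principal (· + ·) (OmegaO : Ordinal.{u}) := fun x y hx hy => st_add_lt_OmegaO hx hy
  exact Ordinal.principal_add_iff_add_left_eq_self.1 h 1 one_lt_OmegaO

lemma st_opow_add_Omega {x y : Ordinal.{u}} (h : x < y) :
    OmegaO ^ x + OmegaO ≤ OmegaO ^ y := by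
  rcases eq_or_ne x 0 with rfl | hx0
  · rw [Ordinal.opow_zero, st_one_add_OmegaO]
    calc OmegaO = OmegaO ^ (1:Ordinal) := (Ordinal.opow_one _).symm
    _ ≤ OmegaO ^ y := Ordinal.opow_le_opow_right OmegaO_pos
      (Ordinal.one_le_iff_ne_zero.2 (by rintro rfl; exact absurd h (lt_irrefl 0)))
  · have hΩx : OmegaO ≤ OmegaO ^ x := by
      calc OmegaO = OmegaO ^ (1:Ordinal) := (Ordinal.opow_one _).symm
      _ ≤ OmegaO ^ x := Ordinal.opow_le_opow_right OmegaO_pos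
        (Ordinal.one_le_iff_ne_zero.2 hx0)
    calc OmegaO ^ x + OmegaO ≤ OmegaO ^ x + OmegaO ^ x := add_le_add_right hΩx _
    _ = OmegaO ^ x * 2 := by rw [← one_add_one_eq_two, mul_add, mul_one]
    _ ≤ OmegaO ^ x * OmegaO := mul_le_mul_right (le_trans (le_of_lt (by exact_mod_cast Ordinal.nat_lt_omega0 2)) omega0_le_OmegaO) _
    _ = OmegaO ^ (x + 1) := by rw [← Ordinal.opow_succ, Order.succ_eq_add_one]
    _ ≤ OmegaO ^ y := Ordinal.opow_le_opow_right OmegaO_pos (Order.add_one_le_of_lt h)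

/-- strengthened monotonicity for multiples of `Ω` -/
lemma st_fs_add_Omega {ξ : Ordinal.{u}} (hM : stM ξ) (hH : stH ξ) :
    ∀ θ' θ'', θ' < θ'' → θ'' ≤ tau ξ → fs ξ θ' + OmegaO ≤ fs ξ θ'' := by
  induction ξ using Ordinal.induction with
  | _ ξ IH =>
    intro θ' θ'' h h2
    rcases st_H_cases hH with
      ⟨a, b, γ, hnf, hb0, hbΩ, hγ0, hγa, hγξ, hHγ, htγ, hMc⟩ |
      ⟨a, hnf, hMc⟩ |
      ⟨a, b', hnf, hb'0, hbΩ, hal, hHa, htaua, hlt⟩ |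
      ⟨a, hnf, hal, hHa, htaua, hlt⟩
    · have e1 := st_fs_mod (θ := θ') hb0 hbΩ hγa hγ0
      have e2 := st_fs_mod (θ := θ'') hb0 hbΩ hγa hγ0
      rw [← hnf] at e1 e2
      rw [e1, e2, add_assoc]
      exact add_le_add_right (IH γ hγξ (hMc hM).1 hHγ θ' θ'' h (htγ ▸ h2)) _
    · have e1 := st_fs_blimit (a := a) (θ := θ') hH.2.2.1 hH.2.2.2
      have e2 := st_fs_blimit (a := a) (θ := θ'') hH.2.2.1 hH.2.2.2
      rw [← hnf] at e1 e2
      rw [e1, e2]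
      have hΩa : OmegaO ≤ OmegaO ^ a := by
        calc OmegaO = OmegaO ^ (1:Ordinal) := (Ordinal.opow_one _).symm
        _ ≤ OmegaO ^ a := Ordinal.opow_le_opow_right OmegaO_pos
          (Ordinal.one_le_iff_ne_zero.2 (hMc hM))
      calc OmegaO ^ a * θ' + OmegaO ≤ OmegaO ^ a * θ' + OmegaO ^ a := add_le_add_right hΩa _
      _ = OmegaO ^ a * (θ' + 1) := by rw [← Ordinal.mul_succ, Order.succ_eq_add_one]
      _ ≤ OmegaO ^ a * θ'' := mul_le_mul_right (Order.add_one_le_of_lt h) _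
    · have e1 := st_fs_bsucc (a := a) (θ := θ') hb'0 hbΩ
      have e2 := st_fs_bsucc (a := a) (θ := θ'') hb'0 hbΩ
      rw [← hnf] at e1 e2
      rw [e1, e2, add_assoc]
      exact add_le_add_right (IH _ hlt (st_M_opow (st_lim_ne hal)) hHa θ' θ'' h (htaua ▸ h2)) _
    · have e1 := st_fs_exp (θ := θ') hal (hnf ▸ hH.2.1)
      have e2 := st_fs_exp (θ := θ'') hal (hnf ▸ hH.2.1)
      rw [← hnf] at e1 e2
      rw [e1, e2]
      exact st_opow_add_Omega (st_fs_strictMono hHa θ' θ'' h (htaua ▸ h2))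

/-- `fs` preserves multiples of `Ω` -/
lemma st_M_fs {ξ : Ordinal.{u}} (hM : stM ξ) (hH : stH ξ) :
    ∀ θ, θ ≠ 0 → stM (fs ξ θ) := by
  induction ξ using Ordinal.induction with
  | _ ξ IH =>
    intro θ hθ
    rcases st_H_cases hH with
      ⟨a, b, γ, hnf, hb0, hbΩ, hγ0, hγa, hγξ, hHγ, htγ, hMc⟩ |
      ⟨a, hnf, hMc⟩ |
      ⟨a, b', hnf, hb'0, hbΩ, hal, hHa, htaua, hlt⟩ |
      ⟨a, hnf, hal, hHa, htaua, hlt⟩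
    · have e := st_fs_mod (θ := θ) hb0 hbΩ hγa hγ0
      rw [← hnf] at e
      rw [e]
      exact st_M_add (st_M_mul (st_M_opow (hMc hM).2)) (IH γ hγξ (hMc hM).1 hHγ θ hθ)
    · have e := st_fs_blimit (a := a) (θ := θ) hH.2.2.1 hH.2.2.2
      rw [← hnf] at e
      rw [e]
      exact st_M_mul (st_M_opow (hMc hM))
    · have e := st_fs_bsucc (a := a) (θ := θ) hb'0 hbΩ
      rw [← hnf] at e
      rw [e]
      exact st_M_add (st_M_mul (st_M_opow (st_lim_ne hal))) (IH _ hlt (st_M_opow (st_lim_ne hal)) hHa θ hθ)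
    · have e := st_fs_exp (θ := θ) hal (hnf ▸ hH.2.1)
      rw [← hnf] at e
      rw [e]
      exact st_M_opow (st_fs_pos hHa hθ).ne'

end Stage5
section Stage6
universe u

lemma st_iSup_lt {f : ℕ → Ordinal.{u}} (hf : ∀ n, f n < OmegaO) : (⨆ n, f n) < OmegaO := by
  refine Ordinal.iSup_lt_ord_lift ?_ hf
  rw [OmegaO, Cardinal.isRegular_aleph_one.cof_eq, Cardinal.mk_denumerable,
    Cardinal.lift_aleph0]
  exact Cardinal.aleph0_lt_aleph_one

lemma st_Iio_countable {θ : Ordinal.{u}} (hθ : θ < OmegaO) : (Set.Iio θ).Countable := by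
  rw [← Set.countable_coe_iff, ← Cardinal.mk_le_aleph0_iff, Ordinal.mk_Iio_ordinal]
  have h1 : θ.card < Cardinal.aleph 1 := Cardinal.lt_ord.1 hθ
  have h2 : θ.card ≤ Cardinal.aleph0 := by
    rwa [← Cardinal.succ_aleph0, Order.lt_succ_iff] at h1
  calc Cardinal.lift.{u+1} θ.card ≤ Cardinal.lift.{u+1} Cardinal.aleph0 :=
    Cardinal.lift_le.2 h2
  _ = Cardinal.aleph0 := Cardinal.lift_aleph0

/-- finite stages of terms with coefficients `< θ` -/
def stD (θ : Ordinal.{u}) : ℕ → Set Ordinal.{u}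
  | 0 => {0}
  | n + 1 => stD θ n ∪ ((fun p : Ordinal.{u} × Ordinal.{u} × Ordinal.{u} =>
      OmegaO ^ p.1 * p.2.1 + p.2.2) '' ((stD θ n) ×ˢ ((Set.Iio θ) ×ˢ (stD θ n))))

lemma st_stD_countable {θ : Ordinal.{u}} (hθ : θ < OmegaO) (n : ℕ) :
    (stD θ n).Countable := by
  induction n with
  | zero => exact Set.countable_singleton 0
  | succ n IH =>
    exact IH.union ((IH.prod ((st_Iio_countable hθ).prod IH)).image _)

lemma st_stD_mono {θ : Ordinal.{u}} {m n : ℕ} (h : m ≤ n) : stD θ m ⊆ stD θ n := by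
  induction n with
  | zero => rw [Nat.le_zero.1 h]
  | succ n IH =>
    rcases Nat.lt_or_ge m (n+1) with h' | h'
    · exact subset_trans (IH (Nat.lt_succ_iff.1 h')) Set.subset_union_left
    · rw [Nat.le_antisymm h h']

lemma st_coeff_countable {θ : Ordinal.{u}} (hθ : θ < OmegaO) :
    {ζ : Ordinal.{u} | ζ < epsOmega ∧ star ζ < θ}.Countable := by
  refine Set.Countable.mono ?_ (Set.countable_iUnion (st_stD_countable hθ))
  intro ζ hζ
  obtain ⟨hζε, hζθ⟩ := hζ
  induction ζ using Ordinal.induction with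
  | _ ζ IH =>
    rcases eq_or_ne ζ 0 with rfl | h0
    · exact Set.mem_iUnion.2 ⟨0, rfl⟩
    · set a := log OmegaO ζ with hadef
      set b := ζ / OmegaO ^ a with hbdef
      set γ := ζ % OmegaO ^ a with hγdef
      have hstar : star ζ = max (max (star a) (star γ)) b := st_star_unfold h0 hζε
      have haζ : a < ζ := st_log_lt h0 hζε
      have hγζ : γ < ζ := Ordinal.mod_opow_log_lt_self OmegaO h0
      have hans := IH a haζ (haζ.trans hζε) (lt_of_le_of_lt (by
        rw [hstar]; exact le_trans (le_max_left _ _) (le_max_left _ _) : star a ≤ star ζ) hζθ)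
      have hγns := IH γ hγζ (hγζ.trans hζε) (lt_of_le_of_lt (by
        rw [hstar]; exact le_trans (le_max_right _ _) (le_max_left _ _) : star γ ≤ star ζ) hζθ)
      obtain ⟨sm, hsm⟩ := Set.mem_iUnion.1 hans
      obtain ⟨sk, hsk⟩ := Set.mem_iUnion.1 hγns
      have hbθ : b < θ := lt_of_le_of_lt (by rw [hstar]; exact le_max_right _ _) hζθ
      refine Set.mem_iUnion.2 ⟨max sm sk + 1, Or.inr ?_⟩
      refine ⟨⟨a, b, γ⟩, ⟨st_stD_mono (le_max_left _ _) hsm, hbθ,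
        st_stD_mono (le_max_right _ _) hsk⟩, ?_⟩
      exact (Ordinal.div_add_mod ζ (OmegaO ^ a))

/-- the defining set of `Θ_X ξ` -/
def stS (X : Set Ordinal.{u}) (ξ : Ordinal.{u}) : Set Ordinal.{u} :=
  {θ | θ ∈ X ∧ star ξ < θ ∧ ∀ ζ, ζ < ξ → star ζ < θ → ThetaF X ζ < θ}

lemma st_Theta_def (X : Set Ordinal.{u}) (ξ : Ordinal.{u}) :
    ThetaF X ξ = sInf (stS X ξ) := by
  rw [ThetaF.eq_def]; rfl

lemma st_Theta_mem {X : Set Ordinal.{u}} {ξ : Ordinal.{u}} (h : (stS X ξ).Nonempty) :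
    ThetaF X ξ ∈ stS X ξ := by
  rw [st_Theta_def]; exact csInf_mem h

lemma st_Theta_le {X : Set Ordinal.{u}} {ξ θ : Ordinal.{u}} (hθ : θ ∈ stS X ξ) :
    ThetaF X ξ ≤ θ := by
  rw [st_Theta_def]; exact csInf_le (OrderBot.bddBelow _) hθ

lemma st_Theta_lt_Omega {X : Set Ordinal.{u}} (hX : IsClubBelowOmega X)
    (ξ : Ordinal.{u}) : ThetaF X ξ < OmegaO := by
  rcases (stS X ξ).eq_empty_or_nonempty with he | hne
  · rw [st_Theta_def, he]
    simpa using OmegaO_pos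
  · exact hX.1 _ (st_Theta_mem hne).1

/-- key existence result: the defining set of `Θ_X ξ` is nonempty for `ξ < ε` -/
lemma st_S_nonempty {X : Set Ordinal.{u}} (hX : IsClubBelowOmega X)
    {ξ : Ordinal.{u}} (hξ : ξ < epsOmega) : (stS X ξ).Nonempty := by
  classical
  -- step: given an element of X, find a larger one absorbing the Θ-values
  have hstep : ∀ θ ∈ X, ∃ θ', θ' ∈ X ∧ θ < θ' ∧
      ∀ ζ, ζ < ξ → star ζ < θ → ThetaF X ζ < θ' := by
    intro θ hθX
    have hθΩ : θ < OmegaO := hX.1 θ hθX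
    set A : Set Ordinal.{u} := {ζ | ζ < ξ ∧ star ζ < θ} with hA
    have hAc : A.Countable := by
      refine Set.Countable.mono ?_ (st_coeff_countable hθΩ)
      intro ζ hζ; exact ⟨hζ.1.trans hξ, hζ.2⟩
    have hkey : ∃ g, g < OmegaO ∧ ∀ ζ ∈ A, ThetaF X ζ < g := by
      rcases A.eq_empty_or_nonempty with he | hne
      · exact ⟨1, one_lt_OmegaO, by rw [he]; simp⟩
      · obtain ⟨e, hAe⟩ := hAc.exists_eq_range hne
        refine ⟨⨆ n, ThetaF X (e n) + 1, st_iSup_lt (fun n => ?_), fun ζ hζ => ?_⟩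
        · rw [← Order.succ_eq_add_one]
          exact st_OmegaO_isLimit.succ_lt (st_Theta_lt_Omega hX _)
        · rw [hAe] at hζ
          obtain ⟨n, rfl⟩ := hζ
          calc ThetaF X (e n) < ThetaF X (e n) + 1 := lt_add_one _
          _ ≤ ⨆ n, ThetaF X (e n) + 1 := le_ciSup (Ordinal.bddAbove_range _) n
    obtain ⟨g, hgΩ, hg⟩ := hkey
    obtain ⟨θ', hθ'X, hθ'⟩ := hX.2.1 (max θ g) (max_lt hθΩ hgΩ)
    exact ⟨θ', hθ'X, lt_of_le_of_lt (le_max_left _ _) hθ',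
      fun ζ h1 h2 => lt_trans (hg ζ ⟨h1, h2⟩) (lt_of_le_of_lt (le_max_right _ _) hθ')⟩
  -- start
  obtain ⟨x0, hx0X, hx0⟩ := hX.2.1 (star ξ) (st_star_lt_Omega hξ)
  -- iterate
  let F : {θ : Ordinal.{u} // θ ∈ X} → {θ : Ordinal.{u} // θ ∈ X} := fun p =>
    ⟨(hstep p.1 p.2).choose, (hstep p.1 p.2).choose_spec.1⟩
  let seq : ℕ → {θ : Ordinal.{u} // θ ∈ X} := fun n =>
    Nat.rec ⟨x0, hx0X⟩ (fun _ p => F p) n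
  have hseq_succ : ∀ n, seq (n+1) = F (seq n) := fun n => rfl
  set f : ℕ → Ordinal.{u} := fun n => (seq n).1 with hf
  have hfX : ∀ n, f n ∈ X := fun n => (seq n).2
  have hflt : ∀ n, f n < f (n+1) := fun n =>
    (hstep (seq n).1 (seq n).2).choose_spec.2.1
  have habs : ∀ n ζ, ζ < ξ → star ζ < f n → ThetaF X ζ < f (n+1) := fun n =>
    (hstep (seq n).1 (seq n).2).choose_spec.2.2
  set σ := ⨆ n, f n with hσ
  have hfσ : ∀ n, f n ≤ σ := fun n => le_ciSup (Ordinal.bddAbove_range f) n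
  have hσΩ : σ < OmegaO := st_iSup_lt (fun n => hX.1 _ (hfX n))
  have hσX : σ ∈ X := by
    have := hX.2.2 (Set.range f) (by rintro _ ⟨n, rfl⟩; exact hfX n)
      ⟨f 0, Set.mem_range_self 0⟩ (by rw [(rfl : sSup (Set.range f) = σ)]; exact hσΩ)
    rwa [(rfl : sSup (Set.range f) = σ)] at this
  refine ⟨σ, hσX, lt_of_lt_of_le hx0 (hfσ 0), fun ζ h1 h2 => ?_⟩
  obtain ⟨n, hn⟩ := (lt_ciSup_iff (Ordinal.bddAbove_range f)).1 h2
  exact lt_of_lt_of_le (habs n ζ h1 hn) (hfσ (n+1))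

lemma st_Theta_inX {X : Set Ordinal.{u}} (hX : IsClubBelowOmega X)
    {ξ : Ordinal.{u}} (hξ : ξ < epsOmega) : ThetaF X ξ ∈ X :=
  (st_Theta_mem (st_S_nonempty hX hξ)).1

lemma st_Theta_gt_star {X : Set Ordinal.{u}} (hX : IsClubBelowOmega X)
    {ξ : Ordinal.{u}} (hξ : ξ < epsOmega) : star ξ < ThetaF X ξ :=
  (st_Theta_mem (st_S_nonempty hX hξ)).2.1

lemma st_Theta_mono {X : Set Ordinal.{u}} (hX : IsClubBelowOmega X)
    {ξ ζ : Ordinal.{u}} (hξ : ξ < epsOmega) (h1 : ζ < ξ)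
    (h2 : star ζ < ThetaF X ξ) : ThetaF X ζ < ThetaF X ξ :=
  (st_Theta_mem (st_S_nonempty hX hξ)).2.2 ζ h1 h2

end Stage6
section Stage7
universe u

lemma st_M_isLimit {δ : Ordinal.{u}} (hM : stM δ) (h0 : δ ≠ 0) : Order.IsSuccLimit δ := by
  obtain ⟨t, rfl⟩ := hM
  have ht : t ≠ 0 := by rintro rfl; simp at h0
  exact Ordinal.isSuccLimit_mul_left st_OmegaO_isLimit (pos_iff_ne_zero.2 ht)

lemma st_fs_zero_decomp {ξ : Ordinal.{u}} (hM : stM ξ) (hH : stH ξ) :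
    ∃ F', stM F' ∧ (fs ξ 0 = F' ∨ fs ξ 0 = F' + 1) := by
  induction ξ using Ordinal.induction with
  | _ ξ IH =>
    rcases st_H_cases hH with
      ⟨a, b, γ, hnf, hb0, hbΩ, hγ0, hγa, hγξ, hHγ, htγ, hMc⟩ |
      ⟨a, hnf, hMc⟩ |
      ⟨a, b', hnf, hb'0, hbΩ, hal, hHa, htaua, hlt⟩ |
      ⟨a, hnf, hal, hHa, htaua, hlt⟩
    · have e := st_fs_mod (θ := 0) hb0 hbΩ hγa hγ0
      rw [← hnf] at e
      obtain ⟨F', hF'M, hF'⟩ := IH γ hγξ (hMc hM).1 hHγ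
      refine ⟨OmegaO ^ a * b + F', st_M_add (st_M_mul (st_M_opow (hMc hM).2)) hF'M, ?_⟩
      rcases hF' with h | h
      · exact Or.inl (by rw [e, h])
      · exact Or.inr (by rw [e, h, add_assoc])
    · have e := st_fs_blimit (a := a) (θ := 0) hH.2.2.1 hH.2.2.2
      rw [← hnf] at e
      exact ⟨0, stM_zero, Or.inl (by rw [e, mul_zero])⟩
    · have e := st_fs_bsucc (a := a) (θ := 0) hb'0 hbΩ
      rw [← hnf] at e
      obtain ⟨F', hF'M, hF'⟩ := IH _ hlt (st_M_opow (st_lim_ne hal)) hHa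
      refine ⟨OmegaO ^ a * b' + F', st_M_add (st_M_mul (st_M_opow (st_lim_ne hal))) hF'M, ?_⟩
      rcases hF' with h | h
      · exact Or.inl (by rw [e, h])
      · exact Or.inr (by rw [e, h, add_assoc])
    · have e := st_fs_exp (θ := 0) hal (hnf ▸ hH.2.1)
      rw [← hnf] at e
      rcases eq_or_ne (fs a 0) 0 with hz | hz
      · exact ⟨0, stM_zero, Or.inr (by rw [e, hz, Ordinal.opow_zero, zero_add])⟩
      · exact ⟨OmegaO ^ fs a 0, st_M_opow hz, Or.inl e⟩

/-- the `star` of `fs α θ + T` equals `T` when `T` dominates all coefficients -/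
lemma st_star_fsT {α T θ : Ordinal.{u}} (hM : stM α) (hH : stH α) (hθ : θ ≤ tau α)
    (hTω : Ordinal.omega0 ≤ T) (hTΩ : T < OmegaO)
    (hsα : star α ≤ T) (hθT : θ ≤ T) :
    star (fs α θ + T) = T := by
  have hT0 : T ≠ 0 := by
    rintro rfl; exact absurd hTω (not_le.2 Ordinal.omega0_pos)
  have hfsle : fs α θ ≤ α := st_fs_le hH hθ
  have hfsε : fs α θ < epsOmega := lt_of_le_of_lt hfsle hH.2.1
  have hsfs : star (fs α θ) ≤ T := by
    refine le_trans (st_star_fs hH θ hθ) (max_le hsα hθT)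
  rcases eq_or_ne θ 0 with rfl | hθ0
  · obtain ⟨F', hF'M, hF'⟩ := st_fs_zero_decomp hM hH
    have hF'le : F' ≤ fs α 0 := by
      rcases hF' with h | h
      · rw [h]
      · rw [h]; exact st_le_add_right _ _
    have hF'ε : F' < epsOmega := lt_of_le_of_lt hF'le hfsε
    have hsF' : star F' ≤ T := by
      rcases hF' with h | h
      · rw [← h]; exact hsfs
      · refine le_trans ?_ hsfs
        rw [h, (st_SL hF'M hF'ε 1 one_lt_OmegaO).1, st_star_countable one_ne_zero one_lt_OmegaO]
        exact le_max_left _ _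
    have heq : fs α 0 + T = F' + T := by
      rcases hF' with h | h
      · rw [h]
      · rw [h, add_assoc, Ordinal.one_add_of_omega0_le hTω]
    rw [heq, (st_SL hF'M hF'ε T hTΩ).1, st_star_countable hT0 hTΩ]
    exact max_eq_right hsF'
  · have hMf : stM (fs α θ) := st_M_fs hM hH θ hθ0
    rw [(st_SL hMf hfsε T hTΩ).1, st_star_countable hT0 hTΩ]
    exact max_eq_right hsfs

end Stage7
/-- `Θ_X(α[τ_n] + Θ*(α+β)) ↗ Θ_X(α+β)` when `τ_n ↗ τ(α) < Ω`. -/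
theorem stmt10 (X : Set Ordinal) (hX : IsClubBelowOmega X) (h0X : 0 ∉ X)
    (αt α β : Ordinal) (hα : α = OmegaO * αt) (hα0 : 0 < α) (hβ : β < OmegaO)
    (htau : tau α < OmegaO) (hmem : α + β ∈ hatEps X) (hjump : α + β ∈ JUMPs X)
    (τs : ℕ → Ordinal) (hmono : StrictMono τs) (hsup : (⨆ n, τs n) = tau α) :
    StrictMono (fun n => ThetaF X (fs α (τs n) + ThetaStarF X (α + β))) ∧
    (⨆ n, ThetaF X (fs α (τs n) + ThetaStarF X (α + β))) = ThetaF X (α + β) := by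
  classical
  have hαβε : α + β < epsOmega := hmem.1
  have hαε : α < epsOmega := lt_of_le_of_lt (st_le_add_right α β) hαβε
  have hαM : stM α := ⟨αt, hα⟩
  have hα0' : α ≠ 0 := hα0.ne'
  have hτs_lt : ∀ n, τs n < tau α := by
    intro n
    calc τs n < τs (n+1) := hmono (lt_add_one n)
    _ ≤ ⨆ m, τs m := le_ciSup (Ordinal.bddAbove_range τs) (n+1)
    _ = tau α := hsup
  have hτlim : Order.IsSuccLimit (tau α) := by
    refine Ordinal.isSuccLimit_iff.2 ⟨?_, Order.isSuccPrelimit_of_succ_lt ?_⟩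
    · intro h
      have := hτs_lt 0
      rw [h] at this
      exact absurd this (not_lt_zero)
    · intro x hx
      rw [← hsup] at hx
      obtain ⟨n, hn⟩ := (lt_ciSup_iff (Ordinal.bddAbove_range τs)).1 hx
      calc Order.succ x ≤ τs n := Order.succ_le_of_lt hn
      _ < tau α := hτs_lt n
  have hHα : stH α := ⟨hα0', hαε, hτlim, htau⟩
  have hτstar : tau α ≤ star α := st_tau_le_star hHα
  have hωτ : Ordinal.omega0 ≤ tau α := Ordinal.omega0_le_of_isSuccLimit hτlim
  have hα_lim : Order.IsSuccLimit α := st_M_isLimit hαM hα0'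
  have hsαβ : star (α + β) = max (star α) (star β) := by
    rcases eq_or_ne β 0 with rfl | h
    · rw [add_zero, st_star_zero, max_eq_left (zero_le)]
    · exact (st_SL hαM hαε β hβ).1
  set T := ThetaStarF X (α + β) with hTdef
  have hαβ0 : α + β ≠ 0 := (lt_of_lt_of_le hα0 (st_le_add_right α β)).ne'
  have key : Ordinal.omega0 ≤ T ∧ T < OmegaO ∧ star α ≤ T ∧ star (α + β) ≤ T ∧
      T < ThetaF X (α + β) ∧ ∀ ζ', ζ' < β → ThetaF X (α + ζ') ≤ T := by
    by_cases hsucc : ∃ ζ, α + β = ζ + 1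
    · -- successor case
      have hβ0 : β ≠ 0 := by
        rintro rfl
        obtain ⟨ζ, hζ⟩ := hsucc
        rw [add_zero] at hζ
        exact Order.not_isSuccLimit_succ ζ (by
          rw [Order.succ_eq_add_one, ← hζ]; exact hα_lim)
      obtain ⟨β', hββ'⟩ : ∃ β', β = β' + 1 := by
        rcases st_zero_or_succ_or_limit β with h | ⟨b', hb'⟩ | h
        · exact absurd h hβ0
        · exact ⟨b', by rw [hb', Order.succ_eq_add_one]⟩
        · exfalso
          obtain ⟨ζ, hζ⟩ := hsucc
          exact Order.not_isSuccLimit_succ ζ (by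
            rw [Order.succ_eq_add_one, ← hζ]; exact Ordinal.isSuccLimit_add α h)
      have hT : T = ThetaF X (α + β') := by
        rw [hTdef]
        simp only [ThetaStarF, if_pos hsucc]
        congr 1
        rw [hββ', ← add_assoc, ← Order.succ_eq_add_one, Ordinal.pred_succ]
      have hβ'Ω : β' < OmegaO := lt_trans (by rw [hββ']; exact lt_add_one β') hβ
      have hαβ'ε : α + β' < epsOmega := st_add_lt_eps hαε (lt_trans hβ'Ω st_Omega_lt_eps)
      have hsαβ' : star (α + β') = max (star α) (star β') := by
        rcases eq_or_ne β' 0 with rfl | h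
        · rw [add_zero, st_star_zero, max_eq_left (zero_le)]
        · exact (st_SL hαM hαε β' hβ'Ω).1
      have hsβ'le : star β' ≤ β' := by
        rcases eq_or_ne β' 0 with rfl | h
        · rw [st_star_zero]
        · rw [st_star_countable h hβ'Ω]
      have hTgt : star (α + β') < T := by
        rw [hT]; exact st_Theta_gt_star hX hαβ'ε
      have hsαT : star α < T := lt_of_le_of_lt (by rw [hsαβ']; exact le_max_left _ _) hTgt
      have hβ'T : β' < T := by
        rcases eq_or_ne β' 0 with rfl | h
        · calc (0 : Ordinal) ≤ star (α + 0) := zero_le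
          _ < T := by rw [add_zero] at hTgt ⊢; exact hTgt
        · calc β' = star β' := (st_star_countable h hβ'Ω).symm
          _ ≤ star (α + β') := by rw [hsαβ']; exact le_max_right _ _
          _ < T := hTgt
      have hβT : β ≤ T := by
        rw [hββ']
        exact Order.add_one_le_of_lt hβ'T
      have hsαβT : star (α + β) ≤ T := by
        rw [hsαβ]
        refine max_le (le_of_lt hsαT) ?_
        calc star β ≤ β := by rw [st_star_countable hβ0 hβ]
        _ ≤ T := hβT
      have hTω : Ordinal.omega0 ≤ T :=
        le_trans hωτ (le_trans hτstar (le_of_lt hsαT))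
      refine ⟨hTω, by rw [hT]; exact st_Theta_lt_Omega hX _, le_of_lt hsαT, hsαβT, ?_, ?_⟩
      · -- T < Θ(α+β)
        rw [hT]
        refine st_Theta_mono hX hαβε ?_ ?_
        · exact (add_lt_add_iff_left α).2 (by rw [hββ']; exact lt_add_one β')
        · refine lt_of_le_of_lt ?_ (st_Theta_gt_star hX hαβε)
          rw [hsαβ', hsαβ, st_star_countable hβ0 hβ]
          refine max_le (le_max_left _ _) (le_trans ?_ (le_max_right _ _))
          calc star β' ≤ β' := hsβ'le
          _ ≤ β := by rw [hββ']; exact le_of_lt (lt_add_one β')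
      · -- bound on Θ(α+ζ')
        intro ζ' hζ'
        have hζ'β' : ζ' ≤ β' := by
          rw [hββ', ← Order.succ_eq_add_one, Order.lt_succ_iff] at hζ'
          exact hζ'
        rcases eq_or_lt_of_le hζ'β' with rfl | hlt
        · exact le_of_eq hT.symm
        · refine le_of_eq_of_le rfl ?_
          rw [hT]
          refine le_of_lt (st_Theta_mono hX hαβ'ε ((add_lt_add_iff_left α).2 hlt) ?_)
          rw [← hT]
          have hζ'Ω : ζ' < OmegaO := lt_trans hlt hβ'Ω
          have : star (α + ζ') ≤ max (star α) ζ' := by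
            rcases eq_or_ne ζ' 0 with rfl | h
            · rw [add_zero]; exact le_max_left _ _
            · rw [(st_SL hαM hαε ζ' hζ'Ω).1, st_star_countable h hζ'Ω]
          refine lt_of_le_of_lt this (max_lt hsαT (lt_trans hlt hβ'T))
    · -- FIX case
      have hFIX : α + β ∈ FIXs X := by
        rcases hjump with (h | h) | h
        · exact absurd h hαβ0
        · exact absurd h hsucc
        · exact h
      have hT : T = tau (α + β) := by
        rw [hTdef]
        simp only [ThetaStarF, if_neg hsucc, if_pos hFIX]
      obtain ⟨hε', hfs1, hst, γ, hγgt, hγε, hγval⟩ := hFIX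
      have hTs : T = star (α + β) := by rw [hT, ← hst]
      have hTγ : T = ThetaF X γ := by rw [hTs, hγval]
      have hsαT : star α ≤ T := by
        rw [hTs, hsαβ]; exact le_max_left _ _
      have hTω : Ordinal.omega0 ≤ T := le_trans hωτ (le_trans hτstar hsαT)
      refine ⟨hTω, by rw [hTs]; exact st_star_lt_Omega hαβε, hsαT, le_of_eq hTs.symm,
        by rw [hTs]; exact st_Theta_gt_star hX hαβε, ?_⟩
      intro ζ' hζ'
      have hβ0 : β ≠ 0 := by
        rintro rfl
        exact absurd hζ' (not_lt_zero)
      have hβl : Order.IsSuccLimit β := by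
        rcases st_zero_or_succ_or_limit β with h | ⟨b', hb'⟩ | h
        · exact absurd h hβ0
        · exact absurd ⟨α + b', by rw [hb', Order.succ_eq_add_one, add_assoc]⟩ hsucc
        · exact h
      have hsαlt : star α < star (α + β) := by
        have e1 : fs (α + β) 1 = α + fs β 1 := (st_SL hαM hαε β hβ).2.2 hβ0 1
        have e2 : fs β 1 = 1 := st_fs_countable_limit hβ hβl
        have e3 : star (fs (α + β) 1) = max (star α) 1 := by
          rw [e1, e2, (st_SL hαM hαε 1 one_lt_OmegaO).1,
            st_star_countable one_ne_zero one_lt_OmegaO]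
        calc star α ≤ max (star α) 1 := le_max_left _ _
        _ = star (fs (α + β) 1) := e3.symm
        _ < star (α + β) := hfs1
      have hζ'star : star (α + ζ') < star (α + β) := by
        rcases eq_or_ne ζ' 0 with rfl | h
        · rw [add_zero]; exact hsαlt
        · have hζ'Ω : ζ' < OmegaO := lt_trans hζ' hβ
          rw [(st_SL hαM hαε ζ' hζ'Ω).1, st_star_countable h hζ'Ω]
          refine max_lt hsαlt ?_
          calc ζ' < β := hζ'
          _ = star β := (st_star_countable hβ0 hβ).symm
          _ ≤ star (α + β) := by rw [hsαβ]; exact le_max_right _ _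
      refine le_of_lt ?_
      rw [hTγ]
      refine st_Theta_mono hX hγε ?_ ?_
      · calc α + ζ' < α + β := (add_lt_add_iff_left α).2 hζ'
        _ < γ := hγgt
      · rw [← hγval]
        exact hζ'star
  obtain ⟨hTω, hTΩ, hsαT, hsαβT, hTΘ, habove⟩ := key
  -- the uniform part
  have hξlt : ∀ n, fs α (τs n) + T < α := by
    intro n
    calc fs α (τs n) + T < fs α (τs n) + OmegaO := (add_lt_add_iff_left _).2 hTΩ
    _ ≤ fs α (tau α) := st_fs_add_Omega hαM hHα (τs n) (tau α) (hτs_lt n) le_rfl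
    _ = α := st_fs_tau hHα
  have hξε : ∀ n, fs α (τs n) + T < epsOmega := fun n => (hξlt n).trans hαε
  have hξαβ : ∀ n, fs α (τs n) + T < α + β := fun n =>
    lt_of_lt_of_le (hξlt n) (st_le_add_right _ _)
  have hξstar : ∀ n, star (fs α (τs n) + T) = T := fun n =>
    st_star_fsT hαM hHα (le_of_lt (hτs_lt n)) hTω hTΩ hsαT
      (le_trans (le_of_lt (hτs_lt n)) (le_trans hτstar hsαT))
  have hξmono : ∀ n m, n < m → fs α (τs n) + T < fs α (τs m) + T := by
    intro n m h
    calc fs α (τs n) + T < fs α (τs n) + OmegaO := (add_lt_add_iff_left _).2 hTΩ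
    _ ≤ fs α (τs m) := st_fs_add_Omega hαM hHα (τs n) (τs m) (hmono h) (le_of_lt (hτs_lt m))
    _ ≤ fs α (τs m) + T := st_le_add_right _ _
  have hΘlt : ∀ n, ThetaF X (fs α (τs n) + T) < ThetaF X (fs α (τs (n+1)) + T) := by
    intro n
    refine st_Theta_mono hX (hξε (n+1)) (hξmono n (n+1) (lt_add_one n)) ?_
    rw [hξstar n]
    have h2 := st_Theta_gt_star hX (hξε (n+1))
    rw [hξstar (n+1)] at h2
    exact h2
  have hSM : StrictMono (fun n => ThetaF X (fs α (τs n) + T)) := strictMono_nat_of_lt_succ hΘlt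
  have hΘltαβ : ∀ n, ThetaF X (fs α (τs n) + T) < ThetaF X (α + β) := fun n =>
    st_Theta_mono hX hαβε (hξαβ n) (by rw [hξstar n]; exact hTΘ)
  refine ⟨hSM, le_antisymm (ciSup_le (fun n => le_of_lt (hΘltαβ n))) ?_⟩
  set σ := ⨆ n, ThetaF X (fs α (τs n) + T) with hσdef
  have hΘn_le : ∀ n, ThetaF X (fs α (τs n) + T) ≤ σ := fun n =>
    le_ciSup (Ordinal.bddAbove_range _) n
  have hTσ : T < σ := by
    calc T = star (fs α (τs 0) + T) := (hξstar 0).symm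
    _ < ThetaF X (fs α (τs 0) + T) := st_Theta_gt_star hX (hξε 0)
    _ ≤ σ := hΘn_le 0
  refine st_Theta_le ⟨?_, ?_, ?_⟩
  · -- σ ∈ X
    have hrange : Set.range (fun n => ThetaF X (fs α (τs n) + T)) ⊆ X := by
      rintro _ ⟨n, rfl⟩; exact st_Theta_inX hX (hξε n)
    have hlt2 : sSup (Set.range fun n => ThetaF X (fs α (τs n) + T)) < OmegaO :=
      st_iSup_lt (fun n => st_Theta_lt_Omega hX _)
    exact hX.2.2 _ hrange ⟨_, Set.mem_range_self 0⟩ hlt2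
  · exact lt_of_le_of_lt hsαβT hTσ
  · intro ζ hζαβ hζσ
    obtain ⟨n, hn⟩ := (lt_ciSup_iff (Ordinal.bddAbove_range _)).1 hζσ
    rcases lt_or_ge ζ α with hζα | hζα
    · obtain ⟨θc, hθτ, hθζ⟩ := st_fs_cofinal hHα ζ hζα
      rw [← hsup] at hθτ
      obtain ⟨m, hm⟩ := (lt_ciSup_iff (Ordinal.bddAbove_range τs)).1 hθτ
      have hθk : θc < τs (max m n) := lt_of_lt_of_le hm (hmono.monotone (le_max_left m n))
      have hζk : ζ < fs α (τs (max m n)) + T := by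
        calc ζ < fs α θc := hθζ
        _ ≤ fs α (τs (max m n)) := le_of_lt (st_fs_strictMono hHα θc (τs (max m n)) hθk
            (le_of_lt (hτs_lt (max m n))))
        _ ≤ fs α (τs (max m n)) + T := st_le_add_right _ _
      have hζstar : star ζ < ThetaF X (fs α (τs (max m n)) + T) :=
        lt_of_lt_of_le hn (hSM.monotone (le_max_right m n))
      calc ThetaF X ζ < ThetaF X (fs α (τs (max m n)) + T) :=
        st_Theta_mono hX (hξε (max m n)) hζk hζstar
      _ < ThetaF X (fs α (τs (max m n + 1)) + T) := hΘlt (max m n)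
      _ ≤ σ := hΘn_le (max m n + 1)
    · have hζ' : α + (ζ - α) = ζ := Ordinal.add_sub_cancel_of_le hζα
      have hζβ : ζ - α < β := by
        rw [← hζ'] at hζαβ
        exact (add_lt_add_iff_left α).1 hζαβ
      calc ThetaF X ζ = ThetaF X (α + (ζ - α)) := by rw [hζ']
      _ ≤ T := habove _ hζβ
      _ < σ := hTσ
end
end
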